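/- arXiv:1702.03578 — 13 statements merged into one kernel-verified Lean document; each statement's English description precedes it below -/
import Mathlib

section
/- Potential outcomes (Y_i)_{i=1}^n satisfy the Neighborhood Interference Assumption (NIA) for a network g if and only if there exist real numbers α_i, β_i and functions Γ_i, Δ_i from the set of treatment vectors of unit i's neighbors {0,1}^{N_i} to ℝ with Γ_i(0) = 0 and Δ_i(0) = 0, such that for every unit i and every allocation z, Y_i(z) = α_i + β_i z_i + Γ_i(z_{N_i}) + z_i Δ_i(z_{N_i}), where z_{N_i} denotes the restriction of z to the neighborhood N_i. -/
open Finset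

/-- Potential outcomes satisfy NIA for the network `g` iff they admit
the parameterization `Y_i(z) = α_i + β_i z_i + Γ_i(z_{N_i}) + z_i Δ_i(z_{N_i})`
with `Γ_i(0) = Δ_i(0) = 0`. -/
theorem stmt_0 (n : ℕ) (hn : 1 ≤ n)
    (g : Fin n → Fin n → Bool) (hg : ∀ i, g i i = false)
    (Y : Fin n → (Fin n → Bool) → ℝ) :
    (∀ (i : Fin n) (z z' : Fin n → Bool),
        (∀ j, (g j i = true ∨ j = i) → z j = z' j) → Y i z = Y i z')
    ↔
    (∃ (α β : Fin n → ℝ)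
        (Γ Δ : ∀ i : Fin n, ({j : Fin n // g j i = true} → Bool) → ℝ),
      (∀ i, Γ i (fun _ => false) = 0) ∧
      (∀ i, Δ i (fun _ => false) = 0) ∧
      (∀ (i : Fin n) (z : Fin n → Bool),
        Y i z = α i + β i * (if z i then (1 : ℝ) else 0)
          + Γ i (fun j => z j.1)
          + (if z i then (1 : ℝ) else 0) * Δ i (fun j => z j.1))) := by
  constructor
  · intro hNIA
    -- embedding of a neighbor-assignment with treatment b for i
    set e : ∀ (i : Fin n), ({j : Fin n // g j i = true} → Bool) → Bool → (Fin n → Bool) :=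
      fun i w b j => if j = i then b else if h : g j i = true then w ⟨j, h⟩ else false with he
    refine ⟨fun i => Y i (e i (fun _ => false) false),
      fun i => Y i (e i (fun _ => false) true) - Y i (e i (fun _ => false) false),
      fun i w => Y i (e i w false) - Y i (e i (fun _ => false) false),
      fun i w => Y i (e i w true) - Y i (e i w false)
        - (Y i (e i (fun _ => false) true) - Y i (e i (fun _ => false) false)),
      fun i => by simp, fun i => by simp, ?_⟩
    intro i z
    have key : ∀ b, Y i (e i (fun j => z j.1) b) = Y i (fun j => if j = i then b else z j) := by
      intro b
      apply hNIA
      intro j hj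
      rcases hj with hj | hj
      · have hji : j ≠ i := by intro h; rw [h, hg] at hj; simp at hj
        simp [he, hji, hj]
      · simp [he, hj]
    cases hz : z i
    · have := key false
      have hz' : (fun j => if j = i then false else z j) = z := by
        funext j; by_cases hji : j = i <;> simp [hji, hz]
      rw [hz'] at this
      simp [hz, this]
    · have := key true
      have hz' : (fun j => if j = i then true else z j) = z := by
        funext j; by_cases hji : j = i <;> simp [hji, hz]
      rw [hz'] at this
      simp [hz, this]
      ring
  · rintro ⟨α, β, Γ, Δ, hΓ, hΔ, hY⟩ i z z' hzz
    rw [hY i z, hY i z']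
    have h1 : z i = z' i := hzz i (Or.inr rfl)
    have h2 : (fun j : {j : Fin n // g j i = true} => z j.1)
        = (fun j : {j : Fin n // g j i = true} => z' j.1) := by
      funext j; exact hzz j.1 (Or.inl j.2)
    rw [h1, h2]
end

section
/- Suppose the potential outcomes satisfy Y_i(z) = α_i + β_i z_i + γ_i d_i^z for all units i and allocations z (for some reals α_i, β_i, γ_i), and suppose interference effects are symmetrically sent: for every unit j, every allocation z with z_j = 0, and all units i, i′ with g_ji = g_ji′ = 1, one has Y_i(z + e_j) − Y_i(z) = Y_{i′}(z + e_j) − Y_{i′}(z). Define the undirected graph h on [n] by h_{ii′} = 1 if and only if (gᵀg)_{ii′} > 0, i.e., units i and i′ share a common in-neighbor. Then γ_i = γ_{i′} whenever i and i′ lie in the same connected component of h. -/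
open Finset

/-- Treated degree of unit `i` under allocation `z`: the number of treated in-neighbors. -/
def trDeg {n : ℕ} (g : Fin n → Fin n → Bool) (z : Fin n → Bool) (i : Fin n) : ℕ :=
  (Finset.univ.filter fun j => g j i = true ∧ z j = true).card

/-- Under the SANASIA-type parameterization
`Y_i(z) = α_i + β_i z_i + γ_i d_i^z` with symmetrically sent interference effects,
the interference coefficients `γ` are constant on connected components of the graph
`h` where `i ~ i'` iff `i` and `i'` share a common in-neighbor. -/
theorem stmt_1 (n : ℕ) (hn : 1 ≤ n)
    (g : Fin n → Fin n → Bool) (hg : ∀ i, g i i = false)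
    (Y : Fin n → (Fin n → Bool) → ℝ)
    (α β γ : Fin n → ℝ)
    (hY : ∀ (i : Fin n) (z : Fin n → Bool),
      Y i z = α i + β i * (if z i then (1 : ℝ) else 0) + γ i * (trDeg g z i : ℝ))
    (hSSIE : ∀ (j : Fin n) (z : Fin n → Bool), z j = false →
      ∀ (i i' : Fin n), g j i = true → g j i' = true →
        Y i (Function.update z j true) - Y i z
          = Y i' (Function.update z j true) - Y i' z)
    (i i' : Fin n)
    (hconn : Relation.ReflTransGen
      (fun a b : Fin n => ∃ j, g j a = true ∧ g j b = true) i i') :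
    γ i = γ i' := by
  have key : ∀ (j a : Fin n), g j a = true →
      Y a (Function.update (fun _ => false) j true) - Y a (fun _ => false) = γ a := by
    intro j a hja
    have hne : a ≠ j := by
      intro h; rw [h] at hja; simp [hg] at hja
    have h0 : trDeg g (fun _ => false) a = 0 := by
      simp [trDeg]
    have h1 : trDeg g (Function.update (fun _ => false) j true) a = 1 := by
      have : (Finset.univ.filter fun k => g k a = true ∧
          Function.update (fun _ : Fin n => false) j true k = true) = {j} := by
        ext k
        simp only [Finset.mem_filter, Finset.mem_univ, true_and, Finset.mem_singleton]
        constructor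
        · rintro ⟨-, hk⟩
          by_contra h
          simp [Function.update_of_ne h] at hk
        · rintro rfl
          exact ⟨hja, by simp⟩
      simp [trDeg, this]
    rw [hY, hY, h0, h1, Function.update_of_ne hne]
    simp
  induction hconn with
  | refl => rfl
  | tail hab hstep ih =>
    obtain ⟨j, hja, hjb⟩ := hstep
    have := hSSIE j (fun _ => false) rfl _ _ hja hjb
    rw [key j _ hja, key j _ hjb] at this
    rw [ih, this]
end

section
/- Fix a design p and weights w = (w_i)_{i∈[n]}, w_i : {0,1}^n → ℝ. The linear estimator β̂^w is unbiased for β̄ for every collection of potential outcomes satisfying NIA if and only if for every unit i: (C1) ∑_z p(z) w_i(z) z_i = 1/n; (C2) ∑_z p(z) w_i(z) = 0; (C3) for every nonzero pattern z′ ∈ {0,1}^{N_i} \ {0}, ∑_z p(z) w_i(z) 1{z_{N_i} = z′} = 0; and (C4) for every nonzero pattern z′ ∈ {0,1}^{N_i} \ {0}, ∑_z p(z) w_i(z) z_i 1{z_{N_i} = z′} = 0. -/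
open Finset

/-- The neighborhood interference assumption. -/
def NIA {n : ℕ} (g : Fin n → Fin n → Bool) (Y : Fin n → (Fin n → Bool) → ℝ) : Prop :=
  ∀ (i : Fin n) (z z' : Fin n → Bool),
    (∀ j, (g j i = true ∨ j = i) → z j = z' j) → Y i z = Y i z'

/-- The average direct treatment effect `β̄ = (1/n) ∑ᵢ (Yᵢ(eᵢ) - Yᵢ(0))`. -/
noncomputable def betaBar {n : ℕ} (Y : Fin n → (Fin n → Bool) → ℝ) : ℝ :=
  (1 / (n : ℝ)) * ∑ i, (Y i (fun j => decide (j = i)) - Y i (fun _ => false))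

section Aux

variable {n : ℕ} (g : Fin n → Fin n → Bool)

/-- restriction of an allocation to the neighborhood of `i`. -/
def restrN (i : Fin n) (z : Fin n → Bool) : {j : Fin n // g j i = true} → Bool :=
  fun j => z j.1

/-- allocation with value `b` at `i`, pattern `z'` on the neighborhood, `false` elsewhere. -/
def rho (i : Fin n) (b : Bool) (z' : {j : Fin n // g j i = true} → Bool) : Fin n → Bool :=
  fun j => if h : g j i = true then z' ⟨j, h⟩ else if j = i then b else false

lemma restrN_rho (i : Fin n) (b : Bool) (z' : {j : Fin n // g j i = true} → Bool) :
    restrN g i (rho g i b z') = z' := by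
  funext j
  simp [restrN, rho, j.2]

lemma nia_rho {Y : Fin n → (Fin n → Bool) → ℝ} (hY : NIA g Y)
    (hg : ∀ i, g i i = false) (i : Fin n) (z : Fin n → Bool) :
    Y i z = Y i (rho g i (z i) (restrN g i z)) := by
  apply hY
  intro j hj
  rcases hj with hj | rfl
  · simp [rho, hj, restrN]
  · simp [rho, hg j]

variable (p : (Fin n → Bool) → ℝ) (w : Fin n → (Fin n → Bool) → ℝ)

noncomputable def Coef (i : Fin n) (q : Bool × ({j : Fin n // g j i = true} → Bool)) : ℝ :=
  ∑ z, p z * w i z * (if z i = q.1 ∧ restrN g i z = q.2 then (1 : ℝ) else 0)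

lemma group_sum {Y : Fin n → (Fin n → Bool) → ℝ} (hY : NIA g Y)
    (hg : ∀ i, g i i = false) (i : Fin n) :
    ∑ z, p z * w i z * Y i z
      = ∑ q : Bool × ({j : Fin n // g j i = true} → Bool),
          Coef g p w i q * Y i (rho g i q.1 q.2) := by
  simp only [Coef, Finset.sum_mul]
  rw [Finset.sum_comm]
  refine Finset.sum_congr rfl fun z _ => Eq.symm ?_
  calc ∑ q : Bool × ({j : Fin n // g j i = true} → Bool),
        p z * w i z * (if z i = q.1 ∧ restrN g i z = q.2 then (1:ℝ) else 0)
          * Y i (rho g i q.1 q.2)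
      = ∑ q : Bool × ({j : Fin n // g j i = true} → Bool),
          if q = (z i, restrN g i z) then p z * w i z * Y i (rho g i q.1 q.2) else 0 := by
        refine Finset.sum_congr rfl fun q _ => ?_
        by_cases h : q = (z i, restrN g i z)
        · subst h
          simp
        · have h2 : ¬(z i = q.1 ∧ restrN g i z = q.2) := by
            rintro ⟨h1, h2⟩
            exact h (Prod.ext h1.symm h2.symm)
          simp [h, h2]
    _ = p z * w i z * Y i (rho g i (z i) (restrN g i z)) := by
        rw [Finset.sum_ite_eq' Finset.univ ((z i, restrN g i z))
          (fun q => p z * w i z * Y i (rho g i q.1 q.2))]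
        simp
    _ = p z * w i z * Y i z := by rw [← nia_rho g hY hg]

lemma coef_true (i : Fin n) (z' : {j : Fin n // g j i = true} → Bool) :
    Coef g p w i (true, z')
      = ∑ z, p z * w i z * (if z i then (1 : ℝ) else 0)
          * (if (fun j : {j : Fin n // g j i = true} => z j.1) = z' then (1 : ℝ) else 0) := by
  refine Finset.sum_congr rfl fun z _ => ?_
  have : (fun j : {j : Fin n // g j i = true} => z j.1) = restrN g i z := rfl
  rw [this]
  by_cases h1 : z i <;> by_cases h2 : restrN g i z = z' <;> simp [h1, h2]

lemma coef_false (i : Fin n) (z' : {j : Fin n // g j i = true} → Bool) :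
    Coef g p w i (false, z')
      = (∑ z, p z * w i z
            * (if (fun j : {j : Fin n // g j i = true} => z j.1) = z' then (1 : ℝ) else 0))
        - Coef g p w i (true, z') := by
  rw [Coef, Coef, ← Finset.sum_sub_distrib]
  refine Finset.sum_congr rfl fun z _ => ?_
  have : (fun j : {j : Fin n // g j i = true} => z j.1) = restrN g i z := rfl
  rw [this]
  by_cases h1 : z i <;> by_cases h2 : restrN g i z = z' <;> simp [h1, h2]

lemma sum_coef (i : Fin n) (b : Bool) :
    ∑ z' : {j : Fin n // g j i = true} → Bool, Coef g p w i (b, z')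
      = ∑ z, p z * w i z * (if z i = b then (1 : ℝ) else 0) := by
  unfold Coef
  rw [Finset.sum_comm]
  refine Finset.sum_congr rfl fun z _ => ?_
  by_cases h : z i = b
  · simp [h, Finset.sum_ite_eq]
  · simp [h]

lemma sum_false_eq (i : Fin n) :
    ∑ z, p z * w i z * (if z i = false then (1 : ℝ) else 0)
      = (∑ z, p z * w i z) - ∑ z, p z * w i z * (if z i then (1 : ℝ) else 0) := by
  rw [← Finset.sum_sub_distrib]
  refine Finset.sum_congr rfl fun z _ => ?_
  by_cases h : z i <;> simp [h]


lemma key_lemma (hg : ∀ i, g i i = false) (i : Fin n)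
    (hC1 : (∑ z, p z * w i z * (if z i then (1 : ℝ) else 0)) = 1 / (n : ℝ))
    (hC2 : (∑ z, p z * w i z) = 0)
    (hC3 : ∀ z' : {j : Fin n // g j i = true} → Bool, z' ≠ (fun _ => false) →
      (∑ z, p z * w i z *
        (if (fun j : {j : Fin n // g j i = true} => z j.1) = z' then (1 : ℝ) else 0)) = 0)
    (hC4 : ∀ z' : {j : Fin n // g j i = true} → Bool, z' ≠ (fun _ => false) →
      (∑ z, p z * w i z * (if z i then (1 : ℝ) else 0) *
        (if (fun j : {j : Fin n // g j i = true} => z j.1) = z' then (1 : ℝ) else 0)) = 0)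
    {Y : Fin n → (Fin n → Bool) → ℝ} (hY : NIA g Y) :
    ∑ z, p z * w i z * Y i z
      = (1 / (n : ℝ)) * (Y i (fun j => decide (j = i)) - Y i (fun _ => false)) := by
  have h4 : ∀ z' : {j : Fin n // g j i = true} → Bool, z' ≠ (fun _ => false) →
      Coef g p w i (true, z') = 0 := fun z' hz' => by
    rw [coef_true]; exact hC4 z' hz'
  have h3 : ∀ z' : {j : Fin n // g j i = true} → Bool, z' ≠ (fun _ => false) →
      Coef g p w i (false, z') = 0 := fun z' hz' => by
    rw [coef_false, coef_true, hC3 z' hz', hC4 z' hz', sub_zero]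
  have ht0 : Coef g p w i (true, fun _ => false) = 1 / (n : ℝ) := by
    have hs := sum_coef g p w i true
    rw [Finset.sum_eq_single (fun _ => false : {j : Fin n // g j i = true} → Bool)] at hs
    · rw [hs]; exact hC1
    · intro b _ hb; exact h4 b hb
    · intro h; exact absurd (Finset.mem_univ _) h
  have hf0 : Coef g p w i (false, fun _ => false) = -(1 / (n : ℝ)) := by
    have hs := sum_coef g p w i false
    rw [Finset.sum_eq_single (fun _ => false : {j : Fin n // g j i = true} → Bool)] at hs
    · rw [hs, sum_false_eq, hC2, hC1]; ring
    · intro b _ hb; exact h3 b hb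
    · intro h; exact absurd (Finset.mem_univ _) h
  have e1 : Y i (rho g i true (fun _ => false)) = Y i (fun j => decide (j = i)) := by
    apply hY
    intro j hj
    rcases hj with hj | rfl
    · have hji : j ≠ i := by rintro rfl; rw [hg j] at hj; exact Bool.noConfusion hj
      simp [rho, hj, hji]
    · simp [rho, hg j]
  have e0 : Y i (rho g i false (fun _ => false)) = Y i (fun _ => false) := by
    apply hY
    intro j hj
    rcases hj with hj | rfl
    · simp [rho, hj]
    · simp [rho, hg j]
  rw [group_sum g p w hY hg i, Fintype.sum_prod_type, Fintype.sum_bool]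
  rw [Finset.sum_eq_single (fun _ => false : {j : Fin n // g j i = true} → Bool)
    (fun b _ hb => by rw [h4 b hb, zero_mul])
    (fun h => absurd (Finset.mem_univ _) h)]
  rw [Finset.sum_eq_single (fun _ => false : {j : Fin n // g j i = true} → Bool)
    (fun b _ hb => by rw [h3 b hb, zero_mul])
    (fun h => absurd (Finset.mem_univ _) h)]
  rw [ht0, hf0, e1, e0]
  ring

end Aux

/-- the linear estimator `β̂^w` is unbiased for `β̄` for every collection
of potential outcomes satisfying NIA iff constraints C1-C4 hold for every unit. -/
theorem stmt_2 (n : ℕ) (hn : 1 ≤ n)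
    (g : Fin n → Fin n → Bool) (hg : ∀ i, g i i = false)
    (p : (Fin n → Bool) → ℝ) (hp0 : ∀ z, 0 ≤ p z) (hp1 : ∑ z, p z = 1)
    (w : Fin n → (Fin n → Bool) → ℝ) :
    (∀ Y : Fin n → (Fin n → Bool) → ℝ, NIA g Y →
      ∑ z, p z * ∑ i, w i z * Y i z = betaBar Y)
    ↔
    (∀ i : Fin n,
      -- (C1)
      (∑ z, p z * w i z * (if z i then (1 : ℝ) else 0)) = 1 / (n : ℝ) ∧
      -- (C2)
      (∑ z, p z * w i z) = 0 ∧
      -- (C3)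
      (∀ z' : {j : Fin n // g j i = true} → Bool, z' ≠ (fun _ => false) →
        (∑ z, p z * w i z *
          (if (fun j : {j : Fin n // g j i = true} => z j.1) = z' then (1 : ℝ) else 0)) = 0) ∧
      -- (C4)
      (∀ z' : {j : Fin n // g j i = true} → Bool, z' ≠ (fun _ => false) →
        (∑ z, p z * w i z * (if z i then (1 : ℝ) else 0) *
          (if (fun j : {j : Fin n // g j i = true} => z j.1) = z' then (1 : ℝ) else 0)) = 0)) := by
  constructor
  · intro H i
    have hne : ∀ j : {j : Fin n // g j i = true}, (j : Fin n) ≠ i := by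
      intro j hj
      have h2 := j.2
      rw [hj, hg] at h2
      exact Bool.noConfusion h2
    refine ⟨?_, ?_, ?_, ?_⟩
    · -- C1
      have hnia : NIA g (fun i' z => if i' = i then (if z i then (1:ℝ) else 0) else 0) := by
        intro a z z'' hzz'
        by_cases ha : a = i
        · subst ha
          simp only [hzz' a (Or.inr rfl)]
        · simp [ha]
      have h := H _ hnia
      have hb : betaBar (fun i' z => if i' = i then (if z i then (1:ℝ) else 0) else 0)
          = 1 / (n : ℝ) := by
        simp only [betaBar]
        rw [Finset.sum_eq_single i (fun b _ hb => by simp [hb])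
          (fun hh => absurd (Finset.mem_univ _) hh)]
        simp
      rw [hb] at h
      refine Eq.trans (Finset.sum_congr rfl fun z _ => ?_) h
      rw [Finset.sum_eq_single i (fun b _ hb => by simp [hb])
        (fun hh => absurd (Finset.mem_univ _) hh)]
      simp [mul_assoc]
    · -- C2
      have h := H (fun i' _ => if i' = i then (1:ℝ) else 0) (fun a z z'' _ => rfl)
      have hb : betaBar (fun i' (_ : Fin n → Bool) => if i' = i then (1:ℝ) else 0) = 0 := by
        simp [betaBar]
      rw [hb] at h
      refine Eq.trans (Finset.sum_congr rfl fun z _ => ?_) h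
      rw [Finset.sum_eq_single i (fun b _ hb => by simp [hb])
        (fun hh => absurd (Finset.mem_univ _) hh)]
      simp
    · -- C3
      intro z' hz'
      have hnia : NIA g (fun i' z => if i' = i then
          (if (fun j : {j : Fin n // g j i = true} => z j.1) = z' then (1:ℝ) else 0) else 0) := by
        intro a z z'' hzz'
        by_cases ha : a = i
        · subst ha
          have heq : (fun j : {j : Fin n // g j a = true} => z j.1)
              = (fun j : {j : Fin n // g j a = true} => z'' j.1) :=
            funext fun j => hzz' j.1 (Or.inl j.2)
          simp only [heq]
        · simp [ha]
      have h := H _ hnia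
      have hz1 : (fun j : {j : Fin n // g j i = true} => decide ((j : Fin n) = i)) ≠ z' := by
        intro hcontra
        apply hz'
        rw [← hcontra]
        funext j
        simp [hne j]
      have hz0 : (fun _ : {j : Fin n // g j i = true} => false) ≠ z' := fun hc => hz' hc.symm
      have hb : betaBar (fun i' z => if i' = i then
          (if (fun j : {j : Fin n // g j i = true} => z j.1) = z' then (1:ℝ) else 0) else 0)
          = 0 := by
        simp only [betaBar]
        rw [Finset.sum_eq_single i (fun b _ hb => by simp [hb])
          (fun hh => absurd (Finset.mem_univ _) hh)]
        rw [if_pos rfl, if_pos rfl, if_neg hz1, if_neg hz0]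
        simp
      rw [hb] at h
      refine Eq.trans (Finset.sum_congr rfl fun z _ => ?_) h
      rw [Finset.sum_eq_single i (fun b _ hb => by simp [hb])
        (fun hh => absurd (Finset.mem_univ _) hh)]
      simp [mul_assoc]
    · -- C4
      intro z' hz'
      have hnia : NIA g (fun i' z => if i' = i then
          ((if z i then (1:ℝ) else 0) *
            (if (fun j : {j : Fin n // g j i = true} => z j.1) = z' then (1:ℝ) else 0)) else 0) := by
        intro a z z'' hzz'
        by_cases ha : a = i
        · subst ha
          have heq : (fun j : {j : Fin n // g j a = true} => z j.1)
              = (fun j : {j : Fin n // g j a = true} => z'' j.1) :=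
            funext fun j => hzz' j.1 (Or.inl j.2)
          simp only [heq, hzz' a (Or.inr rfl)]
        · simp [ha]
      have h := H _ hnia
      have hz1 : (fun j : {j : Fin n // g j i = true} => decide ((j : Fin n) = i)) ≠ z' := by
        intro hcontra
        apply hz'
        rw [← hcontra]
        funext j
        simp [hne j]
      have hb : betaBar (fun i' z => if i' = i then
          ((if z i then (1:ℝ) else 0) *
            (if (fun j : {j : Fin n // g j i = true} => z j.1) = z' then (1:ℝ) else 0)) else 0)
          = 0 := by
        simp only [betaBar]
        rw [Finset.sum_eq_single i (fun b _ hb => by simp [hb])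
          (fun hh => absurd (Finset.mem_univ _) hh)]
        rw [if_pos rfl, if_pos rfl, if_neg hz1]
        simp
      rw [hb] at h
      refine Eq.trans (Finset.sum_congr rfl fun z _ => ?_) h
      rw [Finset.sum_eq_single i (fun b _ hb => by simp [hb])
        (fun hh => absurd (Finset.mem_univ _) hh)]
      rw [if_pos rfl]
      ring
  · intro hC Y hY
    have lhs : ∑ z, p z * ∑ i, w i z * Y i z = ∑ i, ∑ z, p z * w i z * Y i z := by
      calc ∑ z, p z * ∑ i, w i z * Y i z = ∑ z, ∑ i, p z * w i z * Y i z := by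
            refine Finset.sum_congr rfl fun z _ => ?_
            rw [Finset.mul_sum]
            exact Finset.sum_congr rfl fun i _ => (mul_assoc _ _ _).symm
        _ = ∑ i, ∑ z, p z * w i z * Y i z := Finset.sum_comm
    rw [lhs, betaBar, Finset.mul_sum]
    refine Finset.sum_congr rfl fun i _ => ?_
    obtain ⟨hC1, hC2, hC3, hC4⟩ := hC i
    exact key_lemma g p w hg i hC1 hC2 hC3 hC4 hY
end

section
/- Fix a design p. Linear unbiased estimators of β̄ under NIA exist (i.e., there exist weights w such that β̂^w is unbiased for β̄ for every collection of potential outcomes satisfying NIA) if and only if for each unit i there exist allocations z and z′ with p(z) > 0, p(z′) > 0, d_i^z = d_i^{z′} = 0, z_i = 1, and z′_i = 0. -/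
open Finset

lemma trDeg_eq_zero_iff {n : ℕ} (g : Fin n → Fin n → Bool) (z : Fin n → Bool) (i : Fin n) :
    trDeg g z i = 0 ↔ ∀ j, g j i = true → z j = false := by
  unfold trDeg
  rw [Finset.card_eq_zero, Finset.filter_eq_empty_iff]
  constructor
  · intro h j hj
    have := h (Finset.mem_univ j)
    simp only [not_and] at this
    simpa using fun hzj => this hj hzj
  · intro h j _
    simp only [not_and]
    intro hj hzj
    simp [h j hj] at hzj

lemma trDeg_congr {n : ℕ} (g : Fin n → Fin n → Bool) (z z' : Fin n → Bool) (i : Fin n)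
    (h : ∀ j, g j i = true → z j = z' j) : trDeg g z i = trDeg g z' i := by
  unfold trDeg
  congr 1
  apply Finset.filter_congr
  intro j _
  exact and_congr_right fun hgj => by rw [h j hgj]

/-- If `dᵢ^z = 0` and `zᵢ = 1`, then under NIA `Yᵢ(z) = Yᵢ(eᵢ)`. -/
lemma Y_eq_of_trDeg_zero_one {n : ℕ} (g : Fin n → Fin n → Bool) (hg : ∀ i, g i i = false)
    (Y : Fin n → (Fin n → Bool) → ℝ) (hY : NIA g Y) (i : Fin n) (z : Fin n → Bool)
    (hd : trDeg g z i = 0) (hz : z i = true) :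
    Y i z = Y i (fun j => decide (j = i)) := by
  apply hY i
  intro j hj
  rcases hj with hj | hj
  · have hzj : z j = false := (trDeg_eq_zero_iff g z i).1 hd j hj
    have hji : j ≠ i := by
      rintro rfl
      simp [hg j] at hj
    simp [hzj, hji]
  · subst hj
    simp [hz]

/-- If `dᵢ^z = 0` and `zᵢ = 0`, then under NIA `Yᵢ(z) = Yᵢ(0)`. -/
lemma Y_eq_of_trDeg_zero_zero {n : ℕ} (g : Fin n → Fin n → Bool)
    (Y : Fin n → (Fin n → Bool) → ℝ) (hY : NIA g Y) (i : Fin n) (z : Fin n → Bool)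
    (hd : trDeg g z i = 0) (hz : z i = false) :
    Y i z = Y i (fun _ => false) := by
  apply hY i
  intro j hj
  rcases hj with hj | hj
  · exact (trDeg_eq_zero_iff g z i).1 hd j hj
  · subst hj; exact hz

/-- linear unbiased estimators of `β̄` under NIA exist iff for each unit `i`
there are allocations `z, z'` of positive probability with `dᵢ^z = dᵢ^{z'} = 0`,
`zᵢ = 1` and `z'ᵢ = 0`. -/
theorem stmt_4 (n : ℕ) (hn : 1 ≤ n)
    (g : Fin n → Fin n → Bool) (hg : ∀ i, g i i = false)
    (p : (Fin n → Bool) → ℝ) (hp0 : ∀ z, 0 ≤ p z) (hp1 : ∑ z, p z = 1) :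
    (∃ w : Fin n → (Fin n → Bool) → ℝ,
      ∀ Y : Fin n → (Fin n → Bool) → ℝ, NIA g Y →
        ∑ z, p z * ∑ i, w i z * Y i z = betaBar Y)
    ↔
    (∀ i : Fin n, ∃ z z' : Fin n → Bool,
      0 < p z ∧ 0 < p z' ∧ trDeg g z i = 0 ∧ trDeg g z' i = 0 ∧
      z i = true ∧ z' i = false) := by
  classical
  have hn0 : (n : ℝ) ≠ 0 := Nat.cast_ne_zero.2 (by omega)
  constructor
  · -- forward direction
    rintro ⟨w, hw⟩ i
    -- existence of z with z i = true
    have h1 : ∃ z : Fin n → Bool, 0 < p z ∧ trDeg g z i = 0 ∧ z i = true := by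
      by_contra hcon
      push_neg at hcon
      set Y : Fin n → (Fin n → Bool) → ℝ :=
        fun j z => if j = i ∧ trDeg g z i = 0 ∧ z i = true then 1 else 0 with hYdef
      have hNIA : NIA g Y := by
        intro k z z' h
        by_cases hk : k = i
        · subst hk
          have hd := trDeg_congr g z z' k fun j hj => h j (Or.inl hj)
          have hzi := h k (Or.inr rfl)
          simp only [hYdef, hd, hzi]
        · simp [hYdef, hk]
      have hb : betaBar Y = 1 / n := by
        unfold betaBar
        rw [Finset.sum_eq_single i]
        · have h1 : Y i (fun j => decide (j = i)) = 1 := by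
            have hd : trDeg g (fun j => decide (j = i)) i = 0 := by
              rw [trDeg_eq_zero_iff]
              intro j hj
              have hji : j ≠ i := by rintro rfl; simp [hg j] at hj
              simp [hji]
            simp [hYdef, hd]
          have h0 : Y i (fun _ => false) = (0:ℝ) := by simp [hYdef]
          rw [h1, h0]; ring
        · intro j _ hj
          simp [hYdef, hj]
        · intro h; exact absurd (Finset.mem_univ i) h
      have hz : ∑ z, p z * ∑ j, w j z * Y j z = 0 := by
        apply Finset.sum_eq_zero
        intro z _
        have hin : ∑ j, w j z * Y j z = w i z * Y i z := by
          apply Finset.sum_eq_single i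
          · intro j _ hj; simp [hYdef, hj]
          · intro h; exact absurd (Finset.mem_univ i) h
        rw [hin]
        by_cases hc : trDeg g z i = 0 ∧ z i = true
        · have : p z = 0 := by
            by_contra hpz
            exact hcon z (lt_of_le_of_ne (hp0 z) (Ne.symm hpz)) hc.1 hc.2
          simp [this]
        · have : Y i z = 0 := by
            simp only [hYdef]
            rw [if_neg]
            rintro ⟨-, h2, h3⟩
            exact hc ⟨h2, h3⟩
          simp [this]
      rw [hw Y hNIA, hb] at hz
      exact (one_div_ne_zero hn0) hz
    -- existence of z' with z' i = false
    have h0 : ∃ z : Fin n → Bool, 0 < p z ∧ trDeg g z i = 0 ∧ z i = false := by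
      by_contra hcon
      push_neg at hcon
      set Y : Fin n → (Fin n → Bool) → ℝ :=
        fun j z => if j = i ∧ trDeg g z i = 0 ∧ z i = false then 1 else 0 with hYdef
      have hNIA : NIA g Y := by
        intro k z z' h
        by_cases hk : k = i
        · subst hk
          have hd := trDeg_congr g z z' k fun j hj => h j (Or.inl hj)
          have hzi := h k (Or.inr rfl)
          simp only [hYdef, hd, hzi]
        · simp [hYdef, hk]
      have hb : betaBar Y = -(1 / n) := by
        unfold betaBar
        rw [Finset.sum_eq_single i]
        · have h1 : Y i (fun j => decide (j = i)) = 0 := by simp [hYdef]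
          have h0' : Y i (fun _ => false) = (1:ℝ) := by
            have hd : trDeg g (fun _ : Fin n => false) i = 0 := by
              rw [trDeg_eq_zero_iff]; intro j _; rfl
            simp [hYdef, hd]
          rw [h1, h0']; ring
        · intro j _ hj
          simp [hYdef, hj]
        · intro h; exact absurd (Finset.mem_univ i) h
      have hz : ∑ z, p z * ∑ j, w j z * Y j z = 0 := by
        apply Finset.sum_eq_zero
        intro z _
        have hin : ∑ j, w j z * Y j z = w i z * Y i z := by
          apply Finset.sum_eq_single i
          · intro j _ hj; simp [hYdef, hj]
          · intro h; exact absurd (Finset.mem_univ i) h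
        rw [hin]
        by_cases hc : trDeg g z i = 0 ∧ z i = false
        · have : p z = 0 := by
            by_contra hpz
            exact hcon z (lt_of_le_of_ne (hp0 z) (Ne.symm hpz)) hc.1 hc.2
          simp [this]
        · have : Y i z = 0 := by
            simp only [hYdef]
            rw [if_neg]
            rintro ⟨-, h2, h3⟩
            exact hc ⟨h2, h3⟩
          simp [this]
      rw [hw Y hNIA, hb] at hz
      exact (one_div_ne_zero hn0) (neg_eq_zero.1 hz)
    obtain ⟨z, hz1, hz2, hz3⟩ := h1
    obtain ⟨z', hz1', hz2', hz3'⟩ := h0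
    exact ⟨z, z', hz1, hz1', hz2, hz2', hz3, hz3'⟩
  · -- backward direction
    intro h
    set A : Fin n → (Fin n → Bool) → Prop :=
      fun i z => 0 < p z ∧ trDeg g z i = 0 ∧ z i = true with hA
    set B : Fin n → (Fin n → Bool) → Prop :=
      fun i z => 0 < p z ∧ trDeg g z i = 0 ∧ z i = false with hB
    set π1 : Fin n → ℝ := fun i => ∑ z, if A i z then p z else 0 with hπ1
    set π0 : Fin n → ℝ := fun i => ∑ z, if B i z then p z else 0 with hπ0
    have hπ1pos : ∀ i, 0 < π1 i := by
      intro i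
      obtain ⟨z, z', hz1, hz1', hz2, hz2', hz3, hz3'⟩ := h i
      refine Finset.sum_pos' (fun x _ => by split <;> simp [hp0 x, le_refl])
        ⟨z, Finset.mem_univ z, ?_⟩
      rw [if_pos ⟨hz1, hz2, hz3⟩]; exact hz1
    have hπ0pos : ∀ i, 0 < π0 i := by
      intro i
      obtain ⟨z, z', hz1, hz1', hz2, hz2', hz3, hz3'⟩ := h i
      refine Finset.sum_pos' (fun x _ => by split <;> simp [hp0 x, le_refl])
        ⟨z', Finset.mem_univ z', ?_⟩
      rw [if_pos ⟨hz1', hz2', hz3'⟩]; exact hz1'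
    refine ⟨fun i z => (1 / n) *
      ((if A i z then (π1 i)⁻¹ else 0) - (if B i z then (π0 i)⁻¹ else 0)), ?_⟩
    intro Y hY
    have key : ∀ i : Fin n,
        ∑ z, p z * ((1 / (n:ℝ)) *
          ((if A i z then (π1 i)⁻¹ else 0) - (if B i z then (π0 i)⁻¹ else 0)) * Y i z)
        = (1 / n) * (Y i (fun j => decide (j = i)) - Y i (fun _ => false)) := by
      intro i
      have step1 : ∀ z, p z * ((1 / (n:ℝ)) *
          ((if A i z then (π1 i)⁻¹ else 0) - (if B i z then (π0 i)⁻¹ else 0)) * Y i z)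
          = (1 / n) * ((if A i z then (π1 i)⁻¹ * (p z * Y i z) else 0)
            - (if B i z then (π0 i)⁻¹ * (p z * Y i z) else 0)) := by
        intro z
        split_ifs <;> ring
      rw [Finset.sum_congr rfl fun z _ => step1 z]
      rw [← Finset.mul_sum, Finset.sum_sub_distrib]
      have sA : ∑ z, (if A i z then (π1 i)⁻¹ * (p z * Y i z) else 0)
          = Y i (fun j => decide (j = i)) := by
        have e1 : ∀ z, (if A i z then (π1 i)⁻¹ * (p z * Y i z) else 0)
            = (π1 i)⁻¹ * Y i (fun j => decide (j = i)) * (if A i z then p z else 0) := by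
          intro z
          by_cases ha : A i z
          · rw [if_pos ha, if_pos ha]
            rw [Y_eq_of_trDeg_zero_one g hg Y hY i z ha.2.1 ha.2.2]
            ring
          · simp [ha]
        rw [Finset.sum_congr rfl fun z _ => e1 z, ← Finset.mul_sum,
          show (∑ z, if A i z then p z else 0) = π1 i from rfl]
        rw [mul_assoc, mul_comm (Y _ _) (π1 i), ← mul_assoc,
          inv_mul_cancel₀ (ne_of_gt (hπ1pos i)), one_mul]
      have sB : ∑ z, (if B i z then (π0 i)⁻¹ * (p z * Y i z) else 0)
          = Y i (fun _ => false) := by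
        have e1 : ∀ z, (if B i z then (π0 i)⁻¹ * (p z * Y i z) else 0)
            = (π0 i)⁻¹ * Y i (fun _ => false) * (if B i z then p z else 0) := by
          intro z
          by_cases hb : B i z
          · rw [if_pos hb, if_pos hb]
            rw [Y_eq_of_trDeg_zero_zero g Y hY i z hb.2.1 hb.2.2]
            ring
          · simp [hb]
        rw [Finset.sum_congr rfl fun z _ => e1 z, ← Finset.mul_sum,
          show (∑ z, if B i z then p z else 0) = π0 i from rfl]
        rw [mul_assoc, mul_comm (Y _ _) (π0 i), ← mul_assoc,
          inv_mul_cancel₀ (ne_of_gt (hπ0pos i)), one_mul]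
      rw [sA, sB]
    calc ∑ z, p z * ∑ i, (1 / (n:ℝ)) *
          ((if A i z then (π1 i)⁻¹ else 0) - (if B i z then (π0 i)⁻¹ else 0)) * Y i z
        = ∑ z, ∑ i, p z * ((1 / (n:ℝ)) *
          ((if A i z then (π1 i)⁻¹ else 0) - (if B i z then (π0 i)⁻¹ else 0)) * Y i z) := by
          exact Finset.sum_congr rfl fun z _ => Finset.mul_sum _ _ _
      _ = ∑ i, ∑ z, p z * ((1 / (n:ℝ)) *
          ((if A i z then (π1 i)⁻¹ else 0) - (if B i z then (π0 i)⁻¹ else 0)) * Y i z) :=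
          Finset.sum_comm
      _ = ∑ i, (1 / (n:ℝ)) * (Y i (fun j => decide (j = i)) - Y i (fun _ => false)) :=
          Finset.sum_congr rfl fun i _ => key i
      _ = betaBar Y := by rw [betaBar, Finset.mul_sum]
end

section
/- Fix a design p and weights w = (w_i)_{i∈[n]}. The linear estimator β̂^w is unbiased for β̄ for every collection of potential outcomes satisfying SANIA if and only if for every unit i: (C1) ∑_z p(z) w_i(z) z_i = 1/n; (C2) ∑_z p(z) w_i(z) = 0; and (C3′) for every d ∈ {1,…,d_i}, ∑_z p(z) w_i(z) 1{d_i^z = d} = 0. -/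
open Finset

/-- Degree of unit `i`: the number of its in-neighbors. -/
def deg {n : ℕ} (g : Fin n → Fin n → Bool) (i : Fin n) : ℕ :=
  (Finset.univ.filter fun j => g j i = true).card

lemma trDeg_le_deg {n : ℕ} (g : Fin n → Fin n → Bool) (z : Fin n → Bool) (i : Fin n) :
    trDeg g z i ≤ deg g i := by
  apply Finset.card_le_card
  intro j hj
  simp only [Finset.mem_filter, Finset.mem_univ, true_and] at *
  exact hj.1

lemma key {n : ℕ} (g : Fin n → Fin n → Bool) (p : (Fin n → Bool) → ℝ)
    (w : Fin n → (Fin n → Bool) → ℝ) (α β : Fin n → ℝ) (Γ : Fin n → ℕ → ℝ) :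
    ∑ z, p z * ∑ i, w i z *
        (α i + β i * (if z i then (1 : ℝ) else 0) + Γ i (trDeg g z i))
    = ∑ i, (α i * (∑ z, p z * w i z)
        + β i * (∑ z, p z * w i z * (if z i then (1 : ℝ) else 0))
        + ∑ d ∈ Finset.range (deg g i + 1),
            Γ i d * (∑ z, p z * w i z * (if trDeg g z i = d then (1 : ℝ) else 0))) := by
  simp only [Finset.mul_sum]
  rw [Finset.sum_comm]
  refine Finset.sum_congr rfl fun i _ => ?_
  have hΓ : ∀ z : Fin n → Bool,
      ∑ d ∈ Finset.range (deg g i + 1),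
        Γ i d * (p z * w i z * (if trDeg g z i = d then (1 : ℝ) else 0))
      = p z * w i z * Γ i (trDeg g z i) := by
    intro z
    rw [Finset.sum_eq_single (trDeg g z i)]
    · simp [mul_comm]
    · intro b _ hne
      simp [Ne.symm hne]
    · intro h
      exact absurd (Finset.mem_range.mpr (Nat.lt_succ_of_le (trDeg_le_deg g z i))) h
  rw [Finset.sum_comm (s := Finset.range (deg g i + 1)) (t := Finset.univ)]
  simp only [hΓ]
  rw [← Finset.sum_add_distrib, ← Finset.sum_add_distrib]
  refine Finset.sum_congr rfl fun z _ => ?_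
  ring

/-- under SANIA (potential outcomes `Yᵢ(z) = αᵢ + βᵢ zᵢ + Γᵢ(dᵢ^z)` with
`Γᵢ(0) = 0`), the linear estimator `β̂^w` is unbiased for `β̄ = (1/n)∑ᵢ βᵢ` for every
such collection of potential outcomes iff constraints C1, C2 and C3′ hold for every unit. -/
theorem stmt_5 (n : ℕ) (hn : 1 ≤ n)
    (g : Fin n → Fin n → Bool) (hg : ∀ i, g i i = false)
    (p : (Fin n → Bool) → ℝ) (hp0 : ∀ z, 0 ≤ p z) (hp1 : ∑ z, p z = 1)
    (w : Fin n → (Fin n → Bool) → ℝ) :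
    (∀ (α β : Fin n → ℝ) (Γ : Fin n → ℕ → ℝ), (∀ i, Γ i 0 = 0) →
      ∑ z, p z * ∑ i, w i z *
          (α i + β i * (if z i then (1 : ℝ) else 0) + Γ i (trDeg g z i))
        = (1 / (n : ℝ)) * ∑ i, β i)
    ↔
    (∀ i : Fin n,
      -- (C1)
      (∑ z, p z * w i z * (if z i then (1 : ℝ) else 0)) = 1 / (n : ℝ) ∧
      -- (C2)
      (∑ z, p z * w i z) = 0 ∧
      -- (C3′)
      (∀ d : ℕ, 1 ≤ d → d ≤ deg g i →
        (∑ z, p z * w i z * (if trDeg g z i = d then (1 : ℝ) else 0)) = 0)) := by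
  constructor
  · intro h i
    refine ⟨?_, ?_, ?_⟩
    · have h1 := h 0 (fun j => if j = i then 1 else 0) 0 (fun _ => rfl)
      rw [key] at h1
      simpa using h1
    · have h2 := h (fun j => if j = i then 1 else 0) 0 0 (fun _ => rfl)
      rw [key] at h2
      simpa using h2
    · intro d hd1 hd2
      have h3 := h 0 0 (fun j m => if j = i ∧ m = d then 1 else 0)
        (fun j => by simp [show ¬(0 = d) from by omega])
      rw [key g p w 0 0 (fun j m => if j = i ∧ m = d then 1 else 0)] at h3
      simp only [Pi.zero_apply, zero_mul, zero_add, Finset.sum_const_zero, mul_zero] at h3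
      rw [Finset.sum_eq_single i] at h3
      · simp only [true_and] at h3
        rw [Finset.sum_eq_single d] at h3
        · simpa using h3
        · intro b _ hne; simp [hne]
        · intro hdn
          exact absurd (Finset.mem_range.mpr (Nat.lt_succ_of_le hd2)) hdn
      · intro b _ hne
        simp [hne]
      · simp
  · intro h α β Γ hΓ0
    rw [key]
    have : ∀ i : Fin n,
        α i * (∑ z, p z * w i z)
        + β i * (∑ z, p z * w i z * (if z i then (1 : ℝ) else 0))
        + ∑ d ∈ Finset.range (deg g i + 1),
            Γ i d * (∑ z, p z * w i z * (if trDeg g z i = d then (1 : ℝ) else 0))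
        = β i * (1 / (n : ℝ)) := by
      intro i
      obtain ⟨hc1, hc2, hc3⟩ := h i
      rw [hc1, hc2, mul_zero, zero_add]
      have : ∀ d ∈ Finset.range (deg g i + 1),
          Γ i d * (∑ z, p z * w i z * (if trDeg g z i = d then (1 : ℝ) else 0)) = 0 := by
        intro d hdm
        rcases Nat.eq_zero_or_pos d with hd0 | hdp
        · rw [hd0, hΓ0 i, zero_mul]
        · rw [hc3 d hdp (Nat.lt_succ_iff.mp (Finset.mem_range.mp hdm)), mul_zero]
      rw [Finset.sum_eq_zero this, add_zero]
    rw [Finset.sum_congr rfl (fun i _ => this i), ← Finset.sum_mul, mul_comm]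
end

section
/- Fix a design p. Linear unbiased estimators of β̄ under SANIA exist (i.e., there exist weights w such that β̂^w is unbiased for β̄ for every collection of potential outcomes satisfying SANIA) if and only if for each unit i there exist allocations z and z′ with p(z) > 0, p(z′) > 0, d_i^z = d_i^{z′}, z_i = 1, and z′_i = 0. -/
open Finset

/-- linear unbiased estimators of `β̄` under SANIA exist iff for each
unit `i` there are allocations `z, z'` of positive probability with `dᵢ^z = dᵢ^{z'}`,
`zᵢ = 1` and `z'ᵢ = 0`. -/
theorem stmt_6 (n : ℕ) (hn : 1 ≤ n)
    (g : Fin n → Fin n → Bool) (hg : ∀ i, g i i = false)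
    (p : (Fin n → Bool) → ℝ) (hp0 : ∀ z, 0 ≤ p z) (hp1 : ∑ z, p z = 1) :
    (∃ w : Fin n → (Fin n → Bool) → ℝ,
      ∀ (α β : Fin n → ℝ) (Γ : Fin n → ℕ → ℝ), (∀ i, Γ i 0 = 0) →
        ∑ z, p z * ∑ i, w i z *
            (α i + β i * (if z i then (1 : ℝ) else 0) + Γ i (trDeg g z i))
          = (1 / (n : ℝ)) * ∑ i, β i)
    ↔
    (∀ i : Fin n, ∃ z z' : Fin n → Bool,
      0 < p z ∧ 0 < p z' ∧ trDeg g z i = trDeg g z' i ∧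
      z i = true ∧ z' i = false) := by
  classical
  have hn0 : (n : ℝ) ≠ 0 := by
    exact_mod_cast Nat.one_le_iff_ne_zero.mp hn
  constructor
  · rintro ⟨w, hw⟩ i
    by_contra hcon
    push_neg at hcon
    -- hcon : ∀ z z', 0 < p z → 0 < p z' → trDeg g z i = trDeg g z' i →
    --          z i = true → z' i ≠ false
    set h : ℕ → ℝ := fun k =>
      if ∃ z, 0 < p z ∧ trDeg g z i = k ∧ z i = true then 1 else 0 with hh
    -- First spec: β = indicator of i, α = 0, Γ = 0
    have h1 := hw 0 (fun j => if j = i then 1 else 0) (fun _ _ => 0) (fun _ => rfl)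
    simp only [Pi.zero_apply] at h1
    have h1' : ∑ z, p z * (w i z * (if z i then (1 : ℝ) else 0)) = 1 / n := by
      have e1 : ∀ z : Fin n → Bool,
          (∑ j, w j z * ((0 : ℝ) + (if j = i then (1:ℝ) else 0) *
              (if z j then (1 : ℝ) else 0) + 0))
            = w i z * (if z i then (1 : ℝ) else 0) := by
        intro z
        rw [Finset.sum_eq_single i]
        · simp
        · intro j _ hj; simp [hj]
        · simp
      rw [show ((1 : ℝ) / n) = (1 / n) * ∑ j : Fin n, (if j = i then (1:ℝ) else 0) by
            simp]
      rw [← h1]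
      exact Finset.sum_congr rfl fun z _ => by rw [e1 z]
    -- Second spec: α = h 0 at i, β = 0, Γ i k = h k - h 0
    have h2 := hw (fun j => if j = i then h 0 else 0) 0
      (fun j k => if j = i then h k - h 0 else 0) (fun j => by simp)
    simp only [Pi.zero_apply] at h2
    have h2' : ∑ z, p z * (w i z * h (trDeg g z i)) = 0 := by
      have e2 : ∀ z : Fin n → Bool,
          (∑ j, w j z * ((if j = i then h 0 else 0) + (0:ℝ) *
              (if z j then (1 : ℝ) else 0) +
              (if j = i then h (trDeg g z j) - h 0 else 0)))
            = w i z * h (trDeg g z i) := by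
        intro z
        rw [Finset.sum_eq_single i]
        · simp
        · intro j _ hj; simp [hj]
        · simp
      have : ∑ z, p z * (w i z * h (trDeg g z i)) = (1 / (n:ℝ)) * ∑ _j : Fin n, (0:ℝ) := by
        rw [← h2]
        exact Finset.sum_congr rfl fun z _ => by rw [e2 z]
      rw [this]; simp
    -- pointwise equality of the two integrands
    have key : ∀ z : Fin n → Bool,
        p z * (w i z * h (trDeg g z i)) = p z * (w i z * (if z i then (1:ℝ) else 0)) := by
      intro z
      rcases eq_or_lt_of_le (hp0 z) with hz | hz
      · rw [← hz]; ring
      · cases hzi : z i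
        · have : h (trDeg g z i) = 0 := by
            rw [hh]
            simp only [ite_eq_right_iff, one_ne_zero]
            rintro ⟨z', hz', hdeg, hz'i⟩
            exact absurd hzi (hcon z' z hz' hz hdeg hz'i)
          rw [this]; simp
        · have : h (trDeg g z i) = 1 := by
            rw [hh]
            exact if_pos ⟨z, hz, rfl, hzi⟩
          rw [this]; simp [hzi]
    have : (0 : ℝ) = 1 / n := by
      rw [← h2', ← h1']
      exact Finset.sum_congr rfl fun z _ => key z
    exact absurd this.symm (by positivity)
  · intro hex
    choose Z Z' hZ hZ' hdeg hZi hZ'i using hex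
    have hne : ∀ i, Z i ≠ Z' i := by
      intro i he
      have h1 := hZi i
      rw [he, hZ'i i] at h1
      exact Bool.false_ne_true h1
    refine ⟨fun i z => if z = Z i then 1 / (n * p (Z i))
      else if z = Z' i then -(1 / (n * p (Z' i))) else 0, ?_⟩
    intro α β Γ hΓ0
    have swap : ∀ (F : (Fin n → Bool) → Fin n → ℝ),
        ∑ z, p z * ∑ i, F z i = ∑ i, ∑ z, p z * F z i := by
      intro F
      rw [Finset.sum_comm]
      exact Finset.sum_congr rfl fun z _ => Finset.mul_sum _ _ _
    rw [swap]
    rw [Finset.mul_sum]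
    refine Finset.sum_congr rfl fun i _ => ?_
    set Y : (Fin n → Bool) → ℝ := fun z =>
      α i + β i * (if z i then (1 : ℝ) else 0) + Γ i (trDeg g z i) with hY
    set W : (Fin n → Bool) → ℝ := fun z =>
      if z = Z i then 1 / (n * p (Z i))
      else if z = Z' i then -(1 / (n * p (Z' i))) else 0 with hW
    have hvanish : ∀ z ∉ ({Z i, Z' i} : Finset (Fin n → Bool)),
        p z * (W z * Y z) = 0 := by
      intro z hz
      simp only [Finset.mem_insert, Finset.mem_singleton, not_or] at hz
      rw [hW]
      simp [hz.1, hz.2]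
    have hsum : ∑ z, p z * (W z * Y z) = ∑ z ∈ ({Z i, Z' i} : Finset (Fin n → Bool)),
        p z * (W z * Y z) :=
      (Finset.sum_subset (Finset.subset_univ _) (fun z _ hz => hvanish z hz)).symm
    rw [hsum, Finset.sum_pair (hne i)]
    have hWZ : W (Z i) = 1 / (n * p (Z i)) := by rw [hW]; simp
    have hWZ' : W (Z' i) = -(1 / (n * p (Z' i))) := by
      rw [hW]; simp [Ne.symm (hne i)]
    have hYZ : Y (Z i) = α i + β i + Γ i (trDeg g (Z i) i) := by
      rw [hY]; simp [hZi i]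
    have hYZ' : Y (Z' i) = α i + Γ i (trDeg g (Z i) i) := by
      rw [hY]; simp [hZ'i i, ← hdeg i]
    rw [hWZ, hWZ', hYZ, hYZ']
    have hpZ : p (Z i) ≠ 0 := ne_of_gt (hZ i)
    have hpZ' : p (Z' i) ≠ 0 := ne_of_gt (hZ' i)
    field_simp
    ring
end

section
/- Fix a design p, let h be the graph on [n] with h_{ij} = 1{(gᵀg)_{ij} > 0}, and let C_1,…,C_K be the connected components of h. Fix weights w = (w_i)_{i∈[n]}. The linear estimator β̂^w is unbiased for β̄ for every collection of potential outcomes of the SANASIA form Y_i(z) = α_i + β_i z_i + γ_{k(i)} d_i^z (where k(i) is the index of the component of h containing i and α_i, β_i, γ_1,…,γ_K are arbitrary reals) if and only if for every unit i: (C1) ∑_z p(z) w_i(z) z_i = 1/n and (C2) ∑_z p(z) w_i(z) = 0, and additionally for every component k ∈ {1,…,K}: (C3″) ∑_z p(z) ∑_{i ∈ C_k} w_i(z) d_i^z = 0. -/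
open Finset
open scoped Classical

/-- Adjacency in the graph `h`: units `a` and `b` share a common in-neighbor,
i.e. `(gᵀg)_{ab} > 0`. -/
def shareNbr {n : ℕ} (g : Fin n → Fin n → Bool) (a b : Fin n) : Prop :=
  ∃ j, g j a = true ∧ g j b = true

/-- under the SANASIA form `Yᵢ(z) = αᵢ + βᵢ zᵢ + γ_{k(i)} dᵢ^z` (with
`γ` constant on connected components of `h`), the linear estimator `β̂^w` is unbiased
for `β̄` for every such collection of potential outcomes iff C1 and C2 hold for every
unit and C3″ holds for every connected component of `h`. -/
theorem stmt_7 (n : ℕ) (hn : 1 ≤ n)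
    (g : Fin n → Fin n → Bool) (hg : ∀ i, g i i = false)
    (p : (Fin n → Bool) → ℝ) (hp0 : ∀ z, 0 ≤ p z) (hp1 : ∑ z, p z = 1)
    (w : Fin n → (Fin n → Bool) → ℝ) :
    (∀ (α β γ : Fin n → ℝ),
      (∀ i i' : Fin n, Relation.ReflTransGen (shareNbr g) i i' → γ i = γ i') →
      ∑ z, p z * ∑ i, w i z *
          (α i + β i * (if z i then (1 : ℝ) else 0) + γ i * (trDeg g z i : ℝ))
        = (1 / (n : ℝ)) * ∑ i, β i)
    ↔
    ((∀ i : Fin n,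
        -- (C1)
        (∑ z, p z * w i z * (if z i then (1 : ℝ) else 0)) = 1 / (n : ℝ) ∧
        -- (C2)
        (∑ z, p z * w i z) = 0) ∧
      -- (C3″), one constraint for each connected component of `h`
      (∀ i0 : Fin n,
        (∑ z, p z * ∑ i, (if Relation.ReflTransGen (shareNbr g) i0 i
          then w i z * (trDeg g z i : ℝ) else 0)) = 0)) := by
  set R : Fin n → Fin n → Prop := Relation.ReflTransGen (shareNbr g) with hR
  have hsymm0 : Symmetric (shareNbr g) := by
    intro a b ⟨j, h1, h2⟩; exact ⟨j, h2, h1⟩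
  have hsymm : ∀ a b : Fin n, R a b → R b a :=
    fun a b h => by
      haveI : Std.Symm (shareNbr g) := ⟨fun x y hxy => hsymm0 hxy⟩
      exact Std.Symm.symm a b h
  set A : Fin n → ℝ := fun i => ∑ z, p z * w i z with hA
  set B : Fin n → ℝ := fun i => ∑ z, p z * w i z * (if z i then (1 : ℝ) else 0) with hB
  set D : Fin n → ℝ := fun i => ∑ z, p z * w i z * (trDeg g z i : ℝ) with hD
  -- expansion of the LHS sum
  have expand : ∀ α β γ : Fin n → ℝ,
      (∑ z, p z * ∑ i, w i z *
          (α i + β i * (if z i then (1 : ℝ) else 0) + γ i * (trDeg g z i : ℝ)))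
        = ∑ i, (α i * A i + β i * B i + γ i * D i) := by
    intro α β γ
    simp only [Finset.mul_sum]
    rw [Finset.sum_comm]
    refine Finset.sum_congr rfl fun i _ => ?_
    have h1 : ∀ z : Fin n → Bool,
        p z * (w i z * (α i + β i * (if z i then (1 : ℝ) else 0) + γ i * (trDeg g z i : ℝ)))
        = α i * (p z * w i z) + β i * (p z * w i z * (if z i then (1 : ℝ) else 0))
          + γ i * (p z * w i z * (trDeg g z i : ℝ)) := fun z => by ring
    rw [Finset.sum_congr rfl fun z _ => h1 z]
    rw [Finset.sum_add_distrib, Finset.sum_add_distrib,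
      ← Finset.mul_sum, ← Finset.mul_sum, ← Finset.mul_sum]
  -- the component sum in C3'' equals ∑ i, if R i0 i then D i else 0
  have compsum : ∀ i0 : Fin n,
      (∑ z, p z * ∑ i, (if R i0 i then w i z * (trDeg g z i : ℝ) else 0))
        = ∑ i, (if R i0 i then D i else 0) := by
    intro i0
    simp only [Finset.mul_sum, mul_ite, mul_zero]
    rw [Finset.sum_comm]
    refine Finset.sum_congr rfl fun i _ => ?_
    split
    · simp only [hD, ← mul_assoc]
    · simp
  constructor
  · intro H
    constructor
    · intro i
      constructor
      · -- C1
        have h := H 0 (fun j => if j = i then (1 : ℝ) else 0) 0 (by simp)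
        rw [expand] at h
        simp only [Pi.zero_apply, zero_mul, zero_add, add_zero] at h
        rw [Finset.sum_congr rfl (fun j _ => by
          show (if j = i then (1:ℝ) else 0) * B j = if j = i then B j else 0
          split <;> simp_all)] at h
        rw [Finset.sum_ite_eq' univ i B, Finset.sum_ite_eq' univ i (fun _ => (1:ℝ))] at h
        simpa [hB] using h
      · -- C2
        have h := H (fun j => if j = i then (1 : ℝ) else 0) 0 0 (by simp)
        rw [expand] at h
        simp only [Pi.zero_apply, zero_mul, add_zero, Finset.sum_const_zero, mul_zero] at h
        rw [Finset.sum_congr rfl (fun j _ => by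
          show (if j = i then (1:ℝ) else 0) * A j = if j = i then A j else 0
          split <;> simp_all)] at h
        rw [Finset.sum_ite_eq' univ i A] at h
        simpa using h
    · -- C3''
      intro i0
      have hγ : ∀ i i' : Fin n, R i i' →
          (if R i0 i then (1 : ℝ) else 0) = (if R i0 i' then (1 : ℝ) else 0) := by
        intro i i' hii'
        have : R i0 i ↔ R i0 i' :=
          ⟨fun h => h.trans hii', fun h => h.trans (hsymm _ _ hii')⟩
        simp [this]
      have h := H 0 0 (fun i => if R i0 i then (1 : ℝ) else 0) hγ
      rw [expand] at h
      simp only [Pi.zero_apply, zero_mul, zero_add, Finset.sum_const_zero, mul_zero] at h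
      rw [compsum]
      have heq : (∑ i, if R i0 i then D i else 0)
          = ∑ x, (if R i0 x then (1:ℝ) else 0) * D x :=
        Finset.sum_congr rfl fun i _ => by split <;> simp
      rw [heq]; exact h
  · rintro ⟨h12, h3⟩ α β γ hγ
    rw [expand]
    have hDsum : ∀ i0 : Fin n, (∑ i, (if R i0 i then D i else 0)) = 0 := by
      intro i0; rw [← compsum]; exact h3 i0
    -- class sizes
    set c : Fin n → ℕ := fun i => (univ.filter fun j => R i j).card with hc
    have hmem : ∀ i : Fin n, i ∈ univ.filter fun j => R i j := by
      intro i; simp [Relation.ReflTransGen.refl, hR]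
    have hcpos : ∀ i, 0 < c i := fun i => Finset.card_pos.mpr ⟨i, hmem i⟩
    have hceq : ∀ a b : Fin n, R a b → c a = c b := by
      intro a b hab
      apply Finset.card_bij (fun x _ => x) <;> intro x hx <;>
        simp only [Finset.mem_filter, Finset.mem_univ, true_and] at *
      · exact (hsymm _ _ hab).trans hx
      · intro y hy h; exact h
      · exact ⟨x, hab.trans hx, rfl⟩
    have key : ∀ i : Fin n, (∑ i0, if R i0 i then γ i0 / (c i0 : ℝ) else 0) = γ i := by
      intro i
      have step : ∀ i0 : Fin n, (if R i0 i then γ i0 / (c i0 : ℝ) else 0)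
          = (if R i0 i then γ i / (c i : ℝ) else 0) := by
        intro i0
        split
        · rename_i h
          rw [hγ i0 i h, hceq i0 i h]
        · rfl
      rw [Finset.sum_congr rfl fun i0 _ => step i0, ← Finset.sum_filter,
        Finset.sum_const, nsmul_eq_mul]
      have hcard : (univ.filter fun i0 => R i0 i).card = c i := by
        apply Finset.card_bij (fun x _ => x) <;> intro x hx <;>
          simp only [Finset.mem_filter, Finset.mem_univ, true_and] at *
        · exact hsymm _ _ hx
        · intro y hy h; exact h
        · exact ⟨x, hsymm _ _ hx, rfl⟩
      rw [hcard]
      have : (c i : ℝ) ≠ 0 := Nat.cast_ne_zero.mpr (hcpos i).ne'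
      field_simp
    have hγD : (∑ i, γ i * D i) = 0 := by
      calc (∑ i, γ i * D i)
          = ∑ i, (∑ i0, if R i0 i then γ i0 / (c i0 : ℝ) else 0) * D i :=
            Finset.sum_congr rfl fun i _ => by rw [key i]
        _ = ∑ i, ∑ i0, (if R i0 i then γ i0 / (c i0 : ℝ) * D i else 0) := by
            refine Finset.sum_congr rfl fun i _ => ?_
            rw [Finset.sum_mul]
            exact Finset.sum_congr rfl fun i0 _ => by split <;> simp
        _ = ∑ i0, γ i0 / (c i0 : ℝ) * ∑ i, (if R i0 i then D i else 0) := by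
            rw [Finset.sum_comm]
            refine Finset.sum_congr rfl fun i0 _ => ?_
            rw [Finset.mul_sum]
            exact Finset.sum_congr rfl fun i _ => by split <;> simp
        _ = 0 := by
            refine Finset.sum_eq_zero fun i0 _ => ?_
            rw [hDsum i0, mul_zero]
    have hfinal : ∀ i : Fin n, α i * A i + β i * B i + γ i * D i
        = β i * (1 / (n : ℝ)) + γ i * D i := by
      intro i
      have hBi : B i = 1 / (n : ℝ) := (h12 i).1
      have hAi : A i = 0 := (h12 i).2
      rw [hBi, hAi, mul_zero, zero_add]
    rw [Finset.sum_congr rfl fun i _ => hfinal i, Finset.sum_add_distrib, hγD, add_zero,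
      ← Finset.sum_mul, mul_comm]
end

section
/- Suppose n ≥ 2 and the network is complete: g_{ij} = 1 for all i ≠ j. Then linear unbiased estimators of β̄ under NIA exist for a design p if and only if p(0) > 0 and p(e_i) > 0 for every unit i, where e_i is the allocation treating only unit i and 0 is the all-zero allocation. -/
open Finset

/-- for the complete network on `n ≥ 2` units, linear unbiased
estimators of `β̄` under NIA exist iff the design puts positive mass on the
all-zero allocation and on each singleton allocation `eᵢ`. -/
theorem stmt_10 (n : ℕ) (hn : 2 ≤ n)
    (g : Fin n → Fin n → Bool) (hg : ∀ i, g i i = false)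
    (hcomp : ∀ i j : Fin n, i ≠ j → g i j = true)
    (p : (Fin n → Bool) → ℝ) (hp0 : ∀ z, 0 ≤ p z) (hp1 : ∑ z, p z = 1) :
    (∃ w : Fin n → (Fin n → Bool) → ℝ,
      ∀ Y : Fin n → (Fin n → Bool) → ℝ, NIA g Y →
        ∑ z, p z * ∑ i, w i z * Y i z = betaBar Y)
    ↔
    (0 < p (fun _ => false) ∧ ∀ i : Fin n, 0 < p (fun j => decide (j = i))) := by
  have hnR : (n:ℝ) ≠ 0 := by
    have : 0 < n := lt_of_lt_of_le (by norm_num) hn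
    exact_mod_cast this.ne'
  have hNIA : ∀ Y : Fin n → (Fin n → Bool) → ℝ, NIA g Y := by
    intro Y i z z' hz
    have : z = z' := funext fun j => by
      by_cases hj : j = i
      · exact hz j (Or.inr hj)
      · exact hz j (Or.inl (hcomp j i hj))
    rw [this]
  have he0 : ∀ i : Fin n, (fun j => decide (j = i)) ≠ (fun _ : Fin n => false) := by
    intro i h
    have := congrFun h i
    simp at this
  constructor
  · rintro ⟨w, hw⟩
    have key : ∀ (i₀ : Fin n) (z₀ : Fin n → Bool),
        p z₀ * w i₀ z₀ = (1/(n:ℝ)) *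
          ((if (fun j => decide (j = i₀)) = z₀ then (1:ℝ) else 0)
            - (if (fun _ : Fin n => false) = z₀ then (1:ℝ) else 0)) := by
      intro i₀ z₀
      have h := hw (fun i z => if i = i₀ ∧ z = z₀ then (1:ℝ) else 0) (hNIA _)
      rw [betaBar] at h
      simp only [mul_ite, mul_one, mul_zero, ite_and, Finset.sum_ite_eq',
        Finset.mem_univ, if_true, Finset.sum_sub_distrib] at h
      rw [← h]
    have hβ : ∀ i : Fin n, 0 < p (fun j => decide (j = i)) := by
      intro i
      have h := key i (fun j => decide (j = i))
      rw [if_pos rfl, if_neg (fun h' => he0 i h'.symm)] at h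
      have hne : p (fun j => decide (j = i)) ≠ 0 := by
        intro h0
        rw [h0, zero_mul] at h
        have : (1/(n:ℝ)) * ((1:ℝ) - 0) ≠ 0 := by simp [hnR]
        exact this h.symm
      exact lt_of_le_of_ne (hp0 _) (Ne.symm hne)
    refine ⟨?_, hβ⟩
    obtain ⟨i⟩ : Nonempty (Fin n) := ⟨⟨0, by omega⟩⟩
    have h := key i (fun _ => false)
    rw [if_neg (he0 i), if_pos rfl] at h
    have hne : p (fun _ : Fin n => false) ≠ 0 := by
      intro h0
      rw [h0, zero_mul] at h
      have : (1/(n:ℝ)) * ((0:ℝ) - 1) ≠ 0 := by simp [hnR]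
      exact this h.symm
    exact lt_of_le_of_ne (hp0 _) (Ne.symm hne)
  · rintro ⟨h0, hi⟩
    refine ⟨fun i z => if z = (fun j => decide (j = i)) then 1/((n:ℝ) * p (fun j => decide (j = i)))
        else if z = (fun _ => false) then -(1/((n:ℝ) * p (fun _ => false))) else 0, ?_⟩
    intro Y _
    rw [betaBar, Finset.mul_sum]
    simp only [Finset.mul_sum]
    rw [Finset.sum_comm]
    refine Finset.sum_congr rfl fun i _ => ?_
    have hsplit : ∀ z : Fin n → Bool,
        p z * ((if z = (fun j => decide (j = i)) then 1/((n:ℝ) * p (fun j => decide (j = i)))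
          else if z = (fun _ => false) then -(1/((n:ℝ) * p (fun _ => false))) else 0) * Y i z)
        = (if z = (fun j => decide (j = i)) then
            p (fun j => decide (j = i)) * (1/((n:ℝ) * p (fun j => decide (j = i)))) *
              Y i (fun j => decide (j = i)) else 0)
          + (if z = (fun _ => false) then
            p (fun _ : Fin n => false) * (-(1/((n:ℝ) * p (fun _ : Fin n => false)))) *
              Y i (fun _ => false) else 0) := by
      intro z
      by_cases h1 : z = (fun j => decide (j = i))
      · subst h1; rw [if_pos rfl, if_pos rfl, if_neg (he0 i)]; ring
      · rw [if_neg h1, if_neg h1]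
        by_cases h2 : z = (fun _ => false)
        · subst h2; rw [if_pos rfl, if_pos rfl]; ring
        · rw [if_neg h2, if_neg h2]; ring
    rw [Finset.sum_congr rfl (fun z _ => hsplit z), Finset.sum_add_distrib]
    simp only [Finset.sum_ite_eq', Finset.mem_univ, if_true]
    have hpe : p (fun j => decide (j = i)) ≠ 0 := (hi i).ne'
    have hpz : p (fun _ : Fin n => false) ≠ 0 := h0.ne'
    field_simp
    ring
end

section
/- Suppose n ≥ 2, the network is complete (g_{ij} = 1 for all i ≠ j), and the design p is supported on allocations with exactly k treated units for some fixed k (i.e., p(z) > 0 implies ∑_i z_i = k). Then no linear unbiased estimator of β̄ under SANIA exists: for every unit i and any two allocations z, z′ in the support with z_i = 1 and z′_i = 0, one has d_i^z = k − 1 ≠ k = d_i^{z′}, so the existence characterization fails. -/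
open Finset

/-- Number of treated units under allocation `z`. -/
def numTreated {n : ℕ} (z : Fin n → Bool) : ℕ :=
  (Finset.univ.filter fun i => z i = true).card

lemma trDeg_complete {n : ℕ} (g : Fin n → Fin n → Bool) (hg : ∀ i, g i i = false)
    (hcomp : ∀ i j : Fin n, i ≠ j → g i j = true) (z : Fin n → Bool) (i : Fin n) :
    trDeg g z i = ((Finset.univ.filter fun j => z j = true).erase i).card := by
  unfold trDeg
  congr 1
  ext j
  simp only [mem_filter, mem_erase, mem_univ, true_and]
  constructor
  · rintro ⟨hgj, hzj⟩
    refine ⟨?_, hzj⟩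
    rintro rfl
    rw [hg] at hgj
    simp at hgj
  · rintro ⟨hne, hzj⟩
    exact ⟨hcomp j i hne, hzj⟩

lemma trDeg_true {n : ℕ} (g : Fin n → Fin n → Bool) (hg : ∀ i, g i i = false)
    (hcomp : ∀ i j : Fin n, i ≠ j → g i j = true) (z : Fin n → Bool) (i : Fin n)
    (hzi : z i = true) : trDeg g z i = numTreated z - 1 := by
  rw [trDeg_complete g hg hcomp]
  unfold numTreated
  rw [Finset.card_erase_of_mem (by simp [hzi])]

lemma trDeg_false {n : ℕ} (g : Fin n → Fin n → Bool) (hg : ∀ i, g i i = false)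
    (hcomp : ∀ i j : Fin n, i ≠ j → g i j = true) (z : Fin n → Bool) (i : Fin n)
    (hzi : z i = false) : trDeg g z i = numTreated z := by
  rw [trDeg_complete g hg hcomp]
  unfold numTreated
  rw [Finset.erase_eq_of_notMem (by simp [hzi])]

/-- on the complete network with `n ≥ 2` units, if the design is
supported on allocations with exactly `k` treated units, then for every unit `i`
and supported allocations `z, z'` with `zᵢ = 1`, `z'ᵢ = 0` we have
`dᵢ^z = k - 1 ≠ k = dᵢ^{z'}`, and no linear unbiased estimator of `β̄` under SANIA
exists. -/
theorem stmt_11 (n : ℕ) (hn : 2 ≤ n) (k : ℕ)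
    (g : Fin n → Fin n → Bool) (hg : ∀ i, g i i = false)
    (hcomp : ∀ i j : Fin n, i ≠ j → g i j = true)
    (p : (Fin n → Bool) → ℝ) (hp0 : ∀ z, 0 ≤ p z) (hp1 : ∑ z, p z = 1)
    (hsupp : ∀ z : Fin n → Bool, 0 < p z → numTreated z = k) :
    (∀ (i : Fin n) (z z' : Fin n → Bool), 0 < p z → 0 < p z' →
      z i = true → z' i = false →
        trDeg g z i = k - 1 ∧ trDeg g z' i = k ∧ trDeg g z i ≠ trDeg g z' i) ∧
    ¬ (∃ w : Fin n → (Fin n → Bool) → ℝ,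
      ∀ (α β : Fin n → ℝ) (Γ : Fin n → ℕ → ℝ), (∀ i, Γ i 0 = 0) →
        ∑ z, p z * ∑ i, w i z *
            (α i + β i * (if z i then (1 : ℝ) else 0) + Γ i (trDeg g z i))
          = (1 / (n : ℝ)) * ∑ i, β i) := by
  have hn0 : (n : ℝ) ≠ 0 := by positivity
  constructor
  · intro i z z' hz hz' hzi hz'i
    have hkz := hsupp z hz
    have hkz' := hsupp z' hz'
    have h1 : trDeg g z i = k - 1 := by
      rw [trDeg_true g hg hcomp z i hzi, hkz]
    have h2 : trDeg g z' i = k := by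
      rw [trDeg_false g hg hcomp z' i hz'i, hkz']
    have hk1 : 1 ≤ k := by
      rw [← hkz]
      exact Finset.card_pos.mpr ⟨i, by simp [hzi]⟩
    refine ⟨h1, h2, ?_⟩
    rw [h1, h2]
    omega
  · rintro ⟨w, hw⟩
    -- First instantiation: α = 0, β = 1, Γ = 0 gives S = 1.
    have hS1 := hw 0 (fun _ => 1) (fun _ _ => 0) (fun _ => rfl)
    have hS1' : ∑ z, p z * ∑ i, w i z * (if z i then (1 : ℝ) else 0)
        = 1 / (n : ℝ) * (n : ℝ) := by
      simpa using hS1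
    have hS : ∑ z, p z * ∑ i, w i z * (if z i then (1 : ℝ) else 0) = 1 :=
      hS1'.trans (by field_simp)
    rcases Nat.eq_zero_or_pos k with hk | hk
    · -- k = 0 : every supported z is all-false, so S = 0, contradiction.
      have hzero : ∑ z, p z * ∑ i, w i z * (if z i then (1 : ℝ) else 0) = 0 := by
        apply Finset.sum_eq_zero
        intro z _
        rcases (hp0 z).lt_or_eq with hpz | hpz
        · have hnz := hsupp z hpz
          rw [hk] at hnz
          have hall : ∀ i, z i = false := by
            intro i
            by_contra hii
            have hzi : z i = true := by
              cases h : z i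
              · exact absurd h hii
              · rfl
            have hmem : i ∈ Finset.univ.filter fun i => z i = true := by simp [hzi]
            have := Finset.card_pos.mpr ⟨i, hmem⟩
            unfold numTreated at hnz
            omega
          have hinner : ∑ i, w i z * (if z i then (1 : ℝ) else 0) = 0 := by
            apply Finset.sum_eq_zero
            intro i _
            simp [hall i]
          rw [hinner, mul_zero]
        · rw [← hpz, zero_mul]
      rw [hzero] at hS
      norm_num at hS
    · -- k ≥ 1 : use α = -1, β = 0, Γ i d = if d = k then 1 else 0.
      have hΓ0 : ∀ i : Fin n, (fun (_ : Fin n) (d : ℕ) => if d = k then (1 : ℝ) else 0) i 0 = 0 := by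
        intro i
        simp only
        rw [if_neg (by omega)]
      have hS2 := hw (fun _ => -1) 0 (fun _ d => if d = k then (1 : ℝ) else 0) hΓ0
      have hkey : ∑ z, p z * ∑ i, w i z *
          ((-1 : ℝ) + (0 : Fin n → ℝ) i * (if z i then (1 : ℝ) else 0)
            + (if trDeg g z i = k then (1 : ℝ) else 0))
          = - ∑ z, p z * ∑ i, w i z * (if z i then (1 : ℝ) else 0) := by
        rw [← Finset.sum_neg_distrib]
        apply Finset.sum_congr rfl
        intro z _
        rcases (hp0 z).lt_or_eq with hpz | hpz
        · have hnz := hsupp z hpz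
          have hinner : ∑ i, w i z *
              ((-1 : ℝ) + (0 : Fin n → ℝ) i * (if z i then (1 : ℝ) else 0)
                + (if trDeg g z i = k then (1 : ℝ) else 0))
              = ∑ i, -(w i z * (if z i then (1 : ℝ) else 0)) := by
            apply Finset.sum_congr rfl
            intro i _
            cases hzi : z i with
            | false =>
              rw [trDeg_false g hg hcomp z i hzi, hnz]
              simp [hzi]
            | true =>
              have htd : trDeg g z i = k - 1 := by
                rw [trDeg_true g hg hcomp z i hzi, hnz]
              have hne : k - 1 ≠ k := by omega
              rw [htd, if_neg hne]
              simp [hzi]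
          rw [hinner, Finset.sum_neg_distrib, mul_neg]
        · rw [← hpz, zero_mul, zero_mul, neg_zero]
      rw [hkey, hS] at hS2
      simp at hS2
end

section
/- (SUTVA, uncorrelated prior.) Fix a design p such that for each unit i, π_i(1) := ∑_z p(z) z_i ∈ (0,1), and write π_i(0) = 1 − π_i(1). For each unit i let v_i : {0,1} → ℝ with v_i(0) > 0 and v_i(1) > 0 (the per-unit prior variance of the observed outcome, which under a mean-zero prior uncorrelated across units equals v_i(z_i) = σ²_{α,i} + z_i(σ²_{β,i} + 2σ_{αβ,i})). Consider the integrated variance objective IV(w) = ∑_z p(z) ∑_i w_i(z)² v_i(z_i), minimized over all weights w satisfying, for every i, the SUTVA unbiasedness constraints (C1) ∑_z p(z) w_i(z) z_i = 1/n and (C2) ∑_z p(z) w_i(z) = 0. Then the Horvitz–Thompson weights w*_i(z) = (2z_i − 1)/(n π_i(z_i)) satisfy the constraints and minimize IV: for every w satisfying C1 and C2 for all i, IV(w*) ≤ IV(w). -/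
open Finset

/-- SUTVA, uncorrelated prior: the Horvitz–Thompson weights
`w*ᵢ(z) = (2zᵢ - 1)/(n πᵢ(zᵢ))` satisfy the SUTVA unbiasedness constraints C1 and C2
and minimize the integrated variance `IV(w) = ∑_z p(z) ∑ᵢ wᵢ(z)² vᵢ(zᵢ)` among all
weights satisfying those constraints. -/
theorem stmt_13 (n : ℕ) (hn : 1 ≤ n)
    (p : (Fin n → Bool) → ℝ) (hp0 : ∀ z, 0 ≤ p z) (hp1 : ∑ z, p z = 1)
    (π : Fin n → Bool → ℝ)
    (hπdef : ∀ i a, π i a = ∑ z, p z * (if z i = a then (1 : ℝ) else 0))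
    (hπ : ∀ i, 0 < π i true ∧ π i true < 1)
    (v : Fin n → Bool → ℝ) (hv : ∀ i a, 0 < v i a)
    (wstar : Fin n → (Fin n → Bool) → ℝ)
    (hws : ∀ i z, wstar i z =
      ((if z i then (2 : ℝ) else 0) - 1) / ((n : ℝ) * π i (z i))) :
    ((∀ i : Fin n,
        (∑ z, p z * wstar i z * (if z i then (1 : ℝ) else 0)) = 1 / (n : ℝ) ∧
        (∑ z, p z * wstar i z) = 0) ∧
      (∀ w : Fin n → (Fin n → Bool) → ℝ,
        (∀ i : Fin n,
          (∑ z, p z * w i z * (if z i then (1 : ℝ) else 0)) = 1 / (n : ℝ) ∧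
          (∑ z, p z * w i z) = 0) →
        (∑ z, p z * ∑ i, (wstar i z) ^ 2 * v i (z i)) ≤
          (∑ z, p z * ∑ i, (w i z) ^ 2 * v i (z i)))) := by
  have hnR : (0:ℝ) < (n:ℝ) := by exact_mod_cast hn
  have hnne : (n:ℝ) ≠ 0 := hnR.ne'
  have hπsum : ∀ i : Fin n, π i true + π i false = 1 := by
    intro i
    have hterm : ∀ z : Fin n → Bool,
        (p z * if z i = true then (1:ℝ) else 0) + (p z * if z i = false then (1:ℝ) else 0)
          = p z := by
      intro z; cases h : z i <;> simp [h]
    rw [hπdef, hπdef, ← Finset.sum_add_distrib,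
      Finset.sum_congr rfl (fun z _ => hterm z), hp1]
  have hπpos : ∀ i (b : Bool), 0 < π i b := by
    intro i b
    cases b
    · have h1 := (hπ i).2; have h2 := hπsum i; linarith
    · exact (hπ i).1
  have hπne : ∀ i (b : Bool), π i b ≠ 0 := fun i b => (hπpos i b).ne'
  have hC1 : ∀ i : Fin n,
      (∑ z, p z * wstar i z * (if z i then (1:ℝ) else 0)) = 1 / (n:ℝ) := by
    intro i
    have heq : (∑ z, p z * wstar i z * (if z i then (1:ℝ) else 0))
        = (∑ z, p z * (if z i = true then (1:ℝ) else 0)) * (1 / ((n:ℝ) * π i true)) := by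
      rw [Finset.sum_mul]
      refine Finset.sum_congr rfl fun z _ => ?_
      cases h : z i <;> rw [hws i z, h] <;> norm_num
    rw [heq, ← hπdef]
    field_simp
    exact div_self (hπne i true)
  have hC2 : ∀ i : Fin n, (∑ z, p z * wstar i z) = 0 := by
    intro i
    have heq : (∑ z, p z * wstar i z)
        = (∑ z, p z * (if z i = true then (1:ℝ) else 0)) * (1 / ((n:ℝ) * π i true))
          + (∑ z, p z * (if z i = false then (1:ℝ) else 0)) * (-(1 / ((n:ℝ) * π i false))) := by
      rw [Finset.sum_mul, Finset.sum_mul, ← Finset.sum_add_distrib]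
      refine Finset.sum_congr rfl fun z _ => ?_
      cases h : z i <;> rw [hws i z, h] <;> norm_num <;> ring
    rw [heq, ← hπdef, ← hπdef]
    field_simp [hπne i true, hπne i false]
    ring
  refine ⟨fun i => ⟨hC1 i, hC2 i⟩, ?_⟩
  intro w hw
  have hcross : ∀ i : Fin n,
      (∑ z, p z * (wstar i z * v i (z i) * (w i z - wstar i z))) = 0 := by
    intro i
    have hd1 : (∑ z, p z * (w i z - wstar i z) * (if z i then (1:ℝ) else 0)) = 0 := by
      have heq : (∑ z, p z * (w i z - wstar i z) * (if z i then (1:ℝ) else 0))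
          = (∑ z, p z * w i z * (if z i then (1:ℝ) else 0))
            - (∑ z, p z * wstar i z * (if z i then (1:ℝ) else 0)) := by
        rw [← Finset.sum_sub_distrib]
        exact Finset.sum_congr rfl fun z _ => by ring
      rw [heq, (hw i).1, hC1 i, sub_self]
    have hd2 : (∑ z, p z * (w i z - wstar i z)) = 0 := by
      have heq : (∑ z, p z * (w i z - wstar i z))
          = (∑ z, p z * w i z) - (∑ z, p z * wstar i z) := by
        rw [← Finset.sum_sub_distrib]
        exact Finset.sum_congr rfl fun z _ => by ring
      rw [heq, (hw i).2, hC2 i, sub_self]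
    set c1 : ℝ := v i true / ((n:ℝ) * π i true) with hc1
    set c0 : ℝ := -(v i false / ((n:ℝ) * π i false)) with hc0
    have expand : (∑ z, p z * (wstar i z * v i (z i) * (w i z - wstar i z)))
        = c0 * (∑ z, p z * (w i z - wstar i z))
          + (c1 - c0) * (∑ z, p z * (w i z - wstar i z) * (if z i then (1:ℝ) else 0)) := by
      rw [Finset.mul_sum, Finset.mul_sum, ← Finset.sum_add_distrib]
      refine Finset.sum_congr rfl fun z _ => ?_
      cases h : z i <;> rw [hws i z, h, hc1, hc0] <;> norm_num <;> ring
    rw [expand, hd1, hd2]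
    ring
  have hi : ∀ i : Fin n,
      (∑ z, p z * ((wstar i z) ^ 2 * v i (z i))) ≤ ∑ z, p z * ((w i z) ^ 2 * v i (z i)) := by
    intro i
    have hsplit : (∑ z, p z * ((w i z) ^ 2 * v i (z i)))
        = (∑ z, p z * ((wstar i z) ^ 2 * v i (z i)))
          + 2 * (∑ z, p z * (wstar i z * v i (z i) * (w i z - wstar i z)))
          + ∑ z, p z * ((w i z - wstar i z) ^ 2 * v i (z i)) := by
      rw [Finset.mul_sum, ← Finset.sum_add_distrib, ← Finset.sum_add_distrib]
      exact Finset.sum_congr rfl fun z _ => by ring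
    have hnn : 0 ≤ ∑ z, p z * ((w i z - wstar i z) ^ 2 * v i (z i)) :=
      Finset.sum_nonneg fun z _ =>
        mul_nonneg (hp0 z) (mul_nonneg (sq_nonneg _) (hv i (z i)).le)
    rw [hsplit, hcross i]
    linarith
  calc (∑ z, p z * ∑ i, (wstar i z) ^ 2 * v i (z i))
      = ∑ i, ∑ z, p z * ((wstar i z) ^ 2 * v i (z i)) := by
        simp_rw [Finset.mul_sum]; exact Finset.sum_comm
    _ ≤ ∑ i, ∑ z, p z * ((w i z) ^ 2 * v i (z i)) :=
        Finset.sum_le_sum fun i _ => hi i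
    _ = ∑ z, p z * ∑ i, (w i z) ^ 2 * v i (z i) := by
        simp_rw [Finset.mul_sum]; exact Finset.sum_comm.symm
end

section
/- (SUTVA, constant prior, symmetric design.) Let σ²_α, σ²_β, σ_{αβ} be reals such that the 2×2 matrix [[σ²_α, σ_{αβ}],[σ_{αβ}, σ²_β]] is positive semidefinite, and define for each allocation z the n×n matrix Σ(z) by Σ(z)_{ij} = σ²_α + (z_i + z_j)σ_{αβ} + z_i z_j σ²_β. Let the design p be symmetric—p(z ∘ π) = p(z) for every permutation π of [n], where (z ∘ π)_i = z_{π(i)}—with p(0) = p(1) = 0 (neither the all-zero nor the all-one allocation is in the support) and with nonempty support. Consider minimizing IV(w) = ∑_z p(z) ∑_{i,j} w_i(z) w_j(z) Σ(z)_{ij} over all weights w satisfying, for every unit i, (C1) ∑_z p(z) w_i(z) z_i = 1/n and (C2) ∑_z p(z) w_i(z) = 0. Then the naive difference-of-means weights w*_i(z) = z_i/(∑_j z_j) − (1 − z_i)/(n − ∑_j z_j) satisfy the constraints and minimize IV: for every w satisfying C1 and C2 for all i, IV(w*) ≤ IV(w). -/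
open Finset

section stmt14aux

lemma stmt14_jensen {I : Type*} [Fintype I] (p f : I → ℝ) (hp0 : ∀ z, 0 ≤ p z)
    (hp1 : ∑ z, p z = 1) : (∑ z, p z * f z) ^ 2 ≤ ∑ z, p z * f z ^ 2 := by
  set m := ∑ z, p z * f z with hm
  have h0 : 0 ≤ ∑ z, p z * (f z - m) ^ 2 :=
    Finset.sum_nonneg fun z _ => mul_nonneg (hp0 z) (sq_nonneg _)
  have key : ∀ z : I, p z * (f z - m) ^ 2
      = p z * f z ^ 2 - (2 * m) * (p z * f z) + m ^ 2 * p z := fun z => by ring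
  rw [Finset.sum_congr rfl fun z _ => key z, Finset.sum_add_distrib,
    Finset.sum_sub_distrib, ← Finset.mul_sum, ← Finset.mul_sum, ← hm, hp1] at h0
  nlinarith [h0]

lemma stmt14_quad {n : ℕ} (a b c : ℝ) (v ζ : Fin n → ℝ) :
    ∑ i, ∑ j, v i * v j * (a + (ζ i + ζ j) * b + ζ i * ζ j * c)
      = a * (∑ i, v i) ^ 2 + 2 * b * (∑ i, v i) * (∑ i, v i * ζ i)
        + c * (∑ i, v i * ζ i) ^ 2 := by
  have h1 : ∀ i, ∑ j, v i * v j * (a + (ζ i + ζ j) * b + ζ i * ζ j * c)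
      = (v i * a + v i * ζ i * b) * (∑ j, v j)
        + (v i * b + v i * ζ i * c) * (∑ j, v j * ζ j) := by
    intro i
    have key : ∀ j, v i * v j * (a + (ζ i + ζ j) * b + ζ i * ζ j * c)
        = (v i * a + v i * ζ i * b) * v j + (v i * b + v i * ζ i * c) * (v j * ζ j) :=
      fun j => by ring
    rw [Finset.sum_congr rfl fun j _ => key j, Finset.sum_add_distrib,
      ← Finset.mul_sum, ← Finset.mul_sum]
  rw [Finset.sum_congr rfl fun i _ => h1 i, Finset.sum_add_distrib,
    ← Finset.sum_mul, ← Finset.sum_mul, Finset.sum_add_distrib, Finset.sum_add_distrib,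
    ← Finset.sum_mul, ← Finset.sum_mul, ← Finset.sum_mul, ← Finset.sum_mul]
  ring

lemma stmt14_sum_ind {n : ℕ} (z : Fin n → Bool) :
    ∑ i, (if z i then (1 : ℝ) else 0) = (numTreated z : ℝ) := by
  rw [Finset.sum_boole, numTreated]

lemma stmt14_numTreated_comp {n : ℕ} (τ : Equiv.Perm (Fin n)) (z : Fin n → Bool) :
    numTreated (fun i => z (τ i)) = numTreated z := by
  have : (∑ i, if z (τ i) = true then (1:ℕ) else 0) = ∑ i, if z i = true then (1:ℕ) else 0 :=
    Equiv.sum_comp τ (fun i => if z i = true then (1:ℕ) else 0)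
  simpa [numTreated, Finset.sum_boole] using this

lemma stmt14_numTreated_pos {n : ℕ} (z : Fin n → Bool) (h : z ≠ fun _ => false) :
    0 < numTreated z := by
  rw [numTreated, Finset.card_pos]
  by_contra hc
  push_neg at hc
  rw [Finset.filter_eq_empty_iff] at hc
  exact h (funext fun i => by simpa using hc (Finset.mem_univ i))

lemma stmt14_numTreated_lt {n : ℕ} (z : Fin n → Bool) (h : z ≠ fun _ => true) :
    numTreated z < n := by
  rw [numTreated]
  have hle : (Finset.univ.filter fun i => z i = true).card ≤ n := by
    calc (Finset.univ.filter fun i => z i = true).card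
        ≤ (Finset.univ : Finset (Fin n)).card := Finset.card_filter_le _ _
      _ = n := by simp
  rcases lt_or_eq_of_le hle with h1 | h1
  · exact h1
  · exfalso
    have huniv : (Finset.univ.filter fun i => z i = true) = Finset.univ := by
      apply Finset.eq_univ_of_card
      rw [h1]; simp
    exact h (funext fun i => by
      have := huniv ▸ Finset.mem_univ i
      simpa using (Finset.mem_filter.mp this).2)

lemma stmt14_wstar_S {n : ℕ} (z : Fin n → Bool) (hk : (numTreated z : ℝ) ≠ 0)
    (hk' : (n : ℝ) - (numTreated z : ℝ) ≠ 0) :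
    ∑ i, ((if z i then (1 : ℝ) else 0) / (numTreated z : ℝ)
      - (1 - (if z i then (1 : ℝ) else 0)) / ((n : ℝ) - (numTreated z : ℝ))) = 0 := by
  rw [Finset.sum_sub_distrib, ← Finset.sum_div, ← Finset.sum_div, stmt14_sum_ind,
    Finset.sum_sub_distrib, stmt14_sum_ind]
  simp only [Finset.sum_const, Finset.card_univ, Fintype.card_fin, nsmul_eq_mul, mul_one]
  rw [div_self hk, div_self hk']
  ring

lemma stmt14_wstar_T {n : ℕ} (z : Fin n → Bool) (hk : (numTreated z : ℝ) ≠ 0) :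
    ∑ i, ((if z i then (1 : ℝ) else 0) / (numTreated z : ℝ)
      - (1 - (if z i then (1 : ℝ) else 0)) / ((n : ℝ) - (numTreated z : ℝ)))
      * (if z i then (1 : ℝ) else 0) = 1 := by
  have key : ∀ i, ((if z i then (1 : ℝ) else 0) / (numTreated z : ℝ)
      - (1 - (if z i then (1 : ℝ) else 0)) / ((n : ℝ) - (numTreated z : ℝ)))
      * (if z i then (1 : ℝ) else 0) = (if z i then (1 : ℝ) else 0) / (numTreated z : ℝ) := by
    intro i; by_cases h : z i <;> simp [h]
  rw [Finset.sum_congr rfl fun i _ => key i, ← Finset.sum_div, stmt14_sum_ind, div_self hk]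

end stmt14aux

/-- SUTVA, constant prior, symmetric design: the naive
difference-of-means weights `w*ᵢ(z) = zᵢ/(∑ⱼ zⱼ) - (1-zᵢ)/(n - ∑ⱼ zⱼ)` satisfy the
SUTVA unbiasedness constraints C1 and C2, and minimize
`IV(w) = ∑_z p(z) ∑_{i,j} wᵢ(z) wⱼ(z) Σ(z)_{ij}` among all weights satisfying those
constraints, where `Σ(z)_{ij} = σ²_α + (zᵢ + zⱼ)σ_{αβ} + zᵢ zⱼ σ²_β` and the design is
permutation-symmetric with neither the all-zero nor the all-one allocation in its
support. -/
theorem stmt_14 (n : ℕ) (hn : 2 ≤ n)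
    (p : (Fin n → Bool) → ℝ) (hp0 : ∀ z, 0 ≤ p z) (hp1 : ∑ z, p z = 1)
    (σαα σββ σαβ : ℝ)
    (hpsd : 0 ≤ σαα ∧ 0 ≤ σββ ∧ σαβ ^ 2 ≤ σαα * σββ)
    (Sig : (Fin n → Bool) → Fin n → Fin n → ℝ)
    (hSig : ∀ z i j, Sig z i j =
      σαα + ((if z i then (1 : ℝ) else 0) + (if z j then (1 : ℝ) else 0)) * σαβ
        + (if z i then (1 : ℝ) else 0) * (if z j then (1 : ℝ) else 0) * σββ)
    (hsymm : ∀ (τ : Equiv.Perm (Fin n)) (z : Fin n → Bool), p (fun i => z (τ i)) = p z)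
    (hzero : p (fun _ => false) = 0) (hone : p (fun _ => true) = 0)
    (hsupp : ∃ z, 0 < p z)
    (wstar : Fin n → (Fin n → Bool) → ℝ)
    (hws : ∀ i z, wstar i z =
      (if z i then (1 : ℝ) else 0) / (numTreated z : ℝ)
        - (1 - (if z i then (1 : ℝ) else 0)) / ((n : ℝ) - (numTreated z : ℝ))) :
    ((∀ i : Fin n,
        (∑ z, p z * wstar i z * (if z i then (1 : ℝ) else 0)) = 1 / (n : ℝ) ∧
        (∑ z, p z * wstar i z) = 0) ∧
      (∀ w : Fin n → (Fin n → Bool) → ℝ,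
        (∀ i : Fin n,
          (∑ z, p z * w i z * (if z i then (1 : ℝ) else 0)) = 1 / (n : ℝ) ∧
          (∑ z, p z * w i z) = 0) →
        (∑ z, p z * ∑ i, ∑ j, wstar i z * wstar j z * Sig z i j) ≤
          (∑ z, p z * ∑ i, ∑ j, w i z * w j z * Sig z i j))) := by
  obtain ⟨ha0, hc0, hb2⟩ := hpsd
  have hn0 : (n : ℝ) ≠ 0 := Nat.cast_ne_zero.mpr (by omega)
  -- per-allocation facts about the naive weights on the support
  have hden : ∀ z : Fin n → Bool, p z ≠ 0 →
      (numTreated z : ℝ) ≠ 0 ∧ (n : ℝ) - (numTreated z : ℝ) ≠ 0 := by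
    intro z hz
    have hzf : z ≠ fun _ => false := fun h => hz (h ▸ hzero)
    have hzt : z ≠ fun _ => true := fun h => hz (h ▸ hone)
    refine ⟨Nat.cast_ne_zero.mpr (stmt14_numTreated_pos z hzf).ne', ?_⟩
    exact sub_ne_zero.mpr (Ne.symm (by exact_mod_cast (stmt14_numTreated_lt z hzt).ne))
  have hSstar : ∀ z : Fin n → Bool, p z ≠ 0 → ∑ i, wstar i z = 0 := by
    intro z hz
    rw [Finset.sum_congr rfl fun i _ => hws i z]
    exact stmt14_wstar_S z (hden z hz).1 (hden z hz).2
  have hTstar : ∀ z : Fin n → Bool, p z ≠ 0 →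
      ∑ i, wstar i z * (if z i then (1 : ℝ) else 0) = 1 := by
    intro z hz
    rw [Finset.sum_congr rfl fun i _ => by rw [hws i z]]
    exact stmt14_wstar_T z (hden z hz).1
  -- symmetry of the two constraint functionals in the unit index
  have hswap : ∀ i i' : Fin n,
      ((∑ z, p z * wstar i z * (if z i then (1 : ℝ) else 0))
        = (∑ z, p z * wstar i' z * (if z i' then (1 : ℝ) else 0))) ∧
      ((∑ z, p z * wstar i z) = (∑ z, p z * wstar i' z)) := by
    intro i i'
    set τ : Equiv.Perm (Fin n) := Equiv.swap i i' with hτ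
    set e : (Fin n → Bool) ≃ (Fin n → Bool) := Equiv.arrowCongr τ.symm (Equiv.refl Bool) with he
    have hez : ∀ z : Fin n → Bool, e z = fun j => z (τ j) := by
      intro z; funext j; simp [he, Equiv.arrowCongr]
    have hpz : ∀ z, p (e z) = p z := fun z => by rw [hez]; exact hsymm τ z
    have hwz : ∀ z, wstar i (e z) = wstar i' z := by
      intro z
      rw [hws, hws, hez z, stmt14_numTreated_comp τ z]
      simp [hτ, Equiv.swap_apply_left]
    have hiz : ∀ z : Fin n → Bool, (if (e z) i then (1 : ℝ) else 0)
        = (if z i' then (1 : ℝ) else 0) := by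
      intro z; rw [hez z]; simp [hτ, Equiv.swap_apply_left]
    constructor
    · calc (∑ z, p z * wstar i z * (if z i then (1 : ℝ) else 0))
          = ∑ z, p (e z) * wstar i (e z) * (if (e z) i then (1 : ℝ) else 0) :=
            (Equiv.sum_comp e fun z => p z * wstar i z * (if z i then (1 : ℝ) else 0)).symm
        _ = ∑ z, p z * wstar i' z * (if z i' then (1 : ℝ) else 0) :=
            Finset.sum_congr rfl fun z _ => by rw [hpz, hwz, hiz]
    · calc (∑ z, p z * wstar i z)
          = ∑ z, p (e z) * wstar i (e z) :=
            (Equiv.sum_comp e fun z => p z * wstar i z).symm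
        _ = ∑ z, p z * wstar i' z := Finset.sum_congr rfl fun z _ => by rw [hpz, hwz]
  -- total of the C2 functionals is 0, total of the C1 functionals is 1
  have htot2 : ∑ i, (∑ z, p z * wstar i z) = 0 := by
    rw [Finset.sum_comm]
    apply Finset.sum_eq_zero
    intro z _
    by_cases hz : p z = 0
    · simp [hz]
    · rw [← Finset.mul_sum, hSstar z hz, mul_zero]
  have htot1 : ∑ i, (∑ z, p z * wstar i z * (if z i then (1 : ℝ) else 0)) = 1 := by
    rw [Finset.sum_comm]
    calc ∑ z, ∑ i, p z * wstar i z * (if z i then (1 : ℝ) else 0)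
        = ∑ z, p z := by
          refine Finset.sum_congr rfl fun z _ => ?_
          by_cases hz : p z = 0
          · simp [hz]
          · rw [Finset.sum_congr rfl fun i _ => mul_assoc _ _ _, ← Finset.mul_sum,
              hTstar z hz, mul_one]
      _ = 1 := hp1
  have hC2 : ∀ i, (∑ z, p z * wstar i z) = 0 := by
    intro i
    have hs : ∑ i' : Fin n, (∑ z, p z * wstar i' z) = (n : ℝ) * (∑ z, p z * wstar i z) := by
      rw [Finset.sum_congr rfl fun i' (_ : i' ∈ Finset.univ) => (hswap i' i).2,
        Finset.sum_const, Finset.card_univ, Fintype.card_fin, nsmul_eq_mul]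
    rw [hs] at htot2
    exact (mul_eq_zero.mp htot2).resolve_left hn0
  have hC1 : ∀ i, (∑ z, p z * wstar i z * (if z i then (1 : ℝ) else 0)) = 1 / (n : ℝ) := by
    intro i
    have hs : ∑ i' : Fin n, (∑ z, p z * wstar i' z * (if z i' then (1 : ℝ) else 0))
        = (n : ℝ) * (∑ z, p z * wstar i z * (if z i then (1 : ℝ) else 0)) := by
      rw [Finset.sum_congr rfl fun i' (_ : i' ∈ Finset.univ) => (hswap i' i).1,
        Finset.sum_const, Finset.card_univ, Fintype.card_fin, nsmul_eq_mul]
    rw [hs] at htot1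
    rw [eq_div_iff hn0]
    linear_combination htot1
  refine ⟨fun i => ⟨hC1 i, hC2 i⟩, ?_⟩
  -- the quadratic-form identity for the integrated variance
  have hIV : ∀ (v : Fin n → (Fin n → Bool) → ℝ) (z : Fin n → Bool),
      ∑ i, ∑ j, v i z * v j z * Sig z i j
        = σαα * (∑ i, v i z) ^ 2
          + 2 * σαβ * (∑ i, v i z) * (∑ i, v i z * (if z i then (1 : ℝ) else 0))
          + σββ * (∑ i, v i z * (if z i then (1 : ℝ) else 0)) ^ 2 := by
    intro v z
    rw [Finset.sum_congr rfl fun i _ => Finset.sum_congr rfl fun j _ => by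
      rw [hSig z i j]]
    exact stmt14_quad σαα σαβ σββ (fun i => v i z) (fun i => if z i then (1 : ℝ) else 0)
  -- value at the naive weights
  have hIVstar : (∑ z, p z * ∑ i, ∑ j, wstar i z * wstar j z * Sig z i j) = σββ := by
    calc (∑ z, p z * ∑ i, ∑ j, wstar i z * wstar j z * Sig z i j)
        = ∑ z, p z * σββ := by
          refine Finset.sum_congr rfl fun z _ => ?_
          by_cases hz : p z = 0
          · rw [hz, zero_mul, zero_mul]
          · rw [hIV wstar z, hSstar z hz, hTstar z hz]; ring
      _ = σββ := by rw [← Finset.sum_mul, hp1, one_mul]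
  intro w hw
  set S : (Fin n → Bool) → ℝ := fun z => ∑ i, w i z with hS
  set T : (Fin n → Bool) → ℝ := fun z => ∑ i, w i z * (if z i then (1 : ℝ) else 0) with hT
  have hTs : ∑ z, p z * T z = 1 := by
    calc ∑ z, p z * T z
        = ∑ z, ∑ i, p z * w i z * (if z i then (1 : ℝ) else 0) := by
          refine Finset.sum_congr rfl fun z _ => ?_
          rw [hT, Finset.mul_sum]
          exact Finset.sum_congr rfl fun i _ => (mul_assoc _ _ _).symm
      _ = ∑ i, ∑ z, p z * w i z * (if z i then (1 : ℝ) else 0) := Finset.sum_comm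
      _ = ∑ _i : Fin n, 1 / (n : ℝ) := Finset.sum_congr rfl fun i _ => (hw i).1
      _ = 1 := by
          rw [Finset.sum_const, Finset.card_univ, Fintype.card_fin, nsmul_eq_mul]
          field_simp
  have hSs : ∑ z, p z * S z = 0 := by
    calc ∑ z, p z * S z
        = ∑ z, ∑ i, p z * w i z := by
          refine Finset.sum_congr rfl fun z _ => ?_
          rw [hS, Finset.mul_sum]
      _ = ∑ i, ∑ z, p z * w i z := Finset.sum_comm
      _ = 0 := Finset.sum_eq_zero fun i _ => (hw i).2
  have hIVw : (∑ z, p z * ∑ i, ∑ j, w i z * w j z * Sig z i j)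
      = ∑ z, p z * (σαα * S z ^ 2 + 2 * σαβ * S z * T z + σββ * T z ^ 2) :=
    Finset.sum_congr rfl fun z _ => by rw [hIV w z]
  rw [hIVstar, hIVw]
  -- lower bound on the integrated variance
  by_cases ha : σαα = 0
  · have hb : σαβ = 0 := by nlinarith [sq_nonneg σαβ]
    have h1 : ∑ z, p z * (σαα * S z ^ 2 + 2 * σαβ * S z * T z + σββ * T z ^ 2)
        = σββ * ∑ z, p z * T z ^ 2 := by
      rw [Finset.mul_sum]
      exact Finset.sum_congr rfl fun z _ => by rw [ha, hb]; ring
    rw [h1]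
    have := stmt14_jensen p T hp0 hp1
    rw [hTs] at this
    nlinarith [this]
  · have hapos : 0 < σαα := lt_of_le_of_ne ha0 (Ne.symm ha)
    set r : ℝ := σαβ / σαα with hr
    set d : ℝ := σββ - σαβ ^ 2 / σαα with hd
    have hd0 : 0 ≤ d := by
      rw [hd, sub_nonneg, div_le_iff₀ hapos]
      nlinarith [hb2]
    set U : (Fin n → Bool) → ℝ := fun z => S z + r * T z with hU
    have hsplit : ∑ z, p z * (σαα * S z ^ 2 + 2 * σαβ * S z * T z + σββ * T z ^ 2)
        = σαα * (∑ z, p z * U z ^ 2) + d * (∑ z, p z * T z ^ 2) := by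
      calc ∑ z, p z * (σαα * S z ^ 2 + 2 * σαβ * S z * T z + σββ * T z ^ 2)
          = ∑ z, (σαα * (p z * U z ^ 2) + d * (p z * T z ^ 2)) := by
            refine Finset.sum_congr rfl fun z _ => ?_
            rw [hU, hr, hd]
            field_simp
            ring
        _ = σαα * (∑ z, p z * U z ^ 2) + d * (∑ z, p z * T z ^ 2) := by
            rw [Finset.sum_add_distrib, ← Finset.mul_sum, ← Finset.mul_sum]
    have hUs : ∑ z, p z * U z = r := by
      calc ∑ z, p z * U z
          = ∑ z, (p z * S z + r * (p z * T z)) := by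
            refine Finset.sum_congr rfl fun z _ => ?_
            rw [hU]; ring
        _ = (∑ z, p z * S z) + r * (∑ z, p z * T z) := by
            rw [Finset.sum_add_distrib, ← Finset.mul_sum]
        _ = r := by rw [hSs, hTs]; ring
    rw [hsplit]
    have hj1 := stmt14_jensen p U hp0 hp1
    have hj2 := stmt14_jensen p T hp0 hp1
    rw [hUs] at hj1
    rw [hTs] at hj2
    have h1 : σαα * r ^ 2 ≤ σαα * (∑ z, p z * U z ^ 2) :=
      mul_le_mul_of_nonneg_left hj1 ha0
    have h2 : d * 1 ^ 2 ≤ d * (∑ z, p z * T z ^ 2) :=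
      mul_le_mul_of_nonneg_left hj2 hd0
    have hval : σαα * r ^ 2 + d = σββ := by
      rw [hr, hd]
      field_simp
      ring
    nlinarith [h1, h2]
end

section
/- (Vertex-transitive graphs, constant prior.) Let g be an undirected simple graph on [n] (symmetric adjacency matrix, no loops) that is vertex transitive: for all units i, j there is a graph automorphism τ of g with τ(i) = j. Let the design p satisfy: (1) p(τ·z) = p(z) for every automorphism τ of g and allocation z, where (τ·z)_i = z_{τ^{-1}(i)}; and (2) p(z) = 0 for every allocation z for which {d_i^z : z_i = 0} ∩ {d_i^z : z_i = 1} = ∅. Let S be a positive semidefinite (n+1)×(n+1) real matrix indexed by the symbols α, β, Γ(1), …, Γ(n−1), with entries denoted σ_{ξ,ξ′}, and set σ_{ξ,Γ(0)} = σ_{Γ(0),ξ} = 0 for every symbol ξ. Define for each allocation z the n×n matrix Σ(z) by Σ(z)_{ij} = σ_{α,α} + (z_i + z_j)σ_{α,β} + z_i z_j σ_{β,β} + σ_{Γ(d_i^z),Γ(d_j^z)} + z_i σ_{β,Γ(d_j^z)} + z_j σ_{β,Γ(d_i^z)} + σ_{α,Γ(d_i^z)} + σ_{α,Γ(d_j^z)}.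 For an allocation z put n_{a,d}(z) = |{i : z_i = a, d_i^z = d}| and C_d(z) = 1{n_{0,d}(z) > 0 and n_{1,d}(z) > 0}·(1/n_{0,d}(z) + 1/n_{1,d}(z))^{−1}. Then the stratified naive weights w*_i(z) = (C_{d_i^z}(z)/∑_d C_d(z))·(2z_i − 1)/n_{z_i,d_i^z}(z) satisfy the SANIA unbiasedness constraints C1, C2, C3′ for every unit, and minimize IV(w) = ∑_z p(z) ∑_{i,j} w_i(z) w_j(z) Σ(z)_{ij} among all weights w satisfying those constraints. -/
open Finset
open scoped Classical

/-- `τ` is a graph automorphism of `g`. -/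
def IsAut {n : ℕ} (g : Fin n → Fin n → Bool) (τ : Equiv.Perm (Fin n)) : Prop :=
  ∀ a b, g a b = g (τ a) (τ b)

/-- `n_{a,d}(z)`: the number of units with treatment `a` and treated degree `d`. -/
def ncount {n : ℕ} (g : Fin n → Fin n → Bool) (z : Fin n → Bool) (a : Bool) (d : ℕ) : ℕ :=
  (Finset.univ.filter fun i => z i = a ∧ trDeg g z i = d).card


/-! ### Auxiliary lemmas -/

lemma st17_trDeg_le {n : ℕ} (g : Fin n → Fin n → Bool) (hloop : ∀ i, g i i = false)
    (z : Fin n → Bool) (i : Fin n) : trDeg g z i ≤ n - 1 := by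
  have h : (Finset.univ.filter fun j => g j i = true ∧ z j = true) ⊆ Finset.univ.erase i := by
    intro j hj
    simp only [mem_filter] at hj
    refine Finset.mem_erase.2 ⟨?_, Finset.mem_univ j⟩
    rintro rfl
    simp [hloop] at hj
  have := Finset.card_le_card h
  simpa [trDeg, Finset.card_erase_of_mem] using this

lemma st17_sum_ind (m : ℕ) (f : ℕ → ℝ) (hf : f 0 = 0) (d0 : ℕ) (hd0 : d0 ≤ m) :
    ∑ d ∈ Finset.Icc 1 m, (if d0 = d then (1:ℝ) else 0) * f d = f d0 := by
  have : ∀ d ∈ Finset.Icc 1 m, (if d0 = d then (1:ℝ) else 0) * f d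
      = if d0 = d then f d0 else 0 := by
    intro d _
    split <;> rename_i h
    · subst h; ring
    · ring
  rw [Finset.sum_congr rfl this, Finset.sum_ite_eq]
  by_cases h : d0 ∈ Finset.Icc 1 m
  · simp [h]
  · have : d0 = 0 := by
      simp only [Finset.mem_Icc] at h
      omega
    simp [h, this, hf]

section dsums
variable {n : ℕ}

lemma st17_dsum0 (f g : Fin n → ℝ) (k : ℝ) :
    ∑ i, ∑ j, f i * g j * k = (∑ i, f i) * (∑ j, g j) * k := by
  rw [Finset.sum_mul_sum, Finset.sum_mul]
  simp_rw [Finset.sum_mul]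

lemma st17_dsum1 (s : Finset ℕ) (F G : Fin n → ℕ → ℝ) (k : ℕ → ℝ) :
    ∑ i, ∑ j, ∑ d ∈ s, F i d * G j d * k d
      = ∑ d ∈ s, (∑ i, F i d) * (∑ j, G j d) * k d := by
  calc ∑ i, ∑ j, ∑ d ∈ s, F i d * G j d * k d
      = ∑ i, ∑ d ∈ s, ∑ j, F i d * G j d * k d :=
        Finset.sum_congr rfl fun i _ => Finset.sum_comm
    _ = ∑ d ∈ s, ∑ i, ∑ j, F i d * G j d * k d := Finset.sum_comm
    _ = ∑ d ∈ s, (∑ i, F i d) * (∑ j, G j d) * k d :=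
        Finset.sum_congr rfl fun d _ => st17_dsum0 _ _ _

lemma st17_dsum2 (s t : Finset ℕ) (F G : Fin n → ℕ → ℝ) (k : ℕ → ℕ → ℝ) :
    ∑ i, ∑ j, ∑ d ∈ s, ∑ d' ∈ t, F i d * G j d' * k d d'
      = ∑ d ∈ s, ∑ d' ∈ t, (∑ i, F i d) * (∑ j, G j d') * k d d' := by
  calc ∑ i, ∑ j, ∑ d ∈ s, ∑ d' ∈ t, F i d * G j d' * k d d'
      = ∑ i, ∑ d ∈ s, ∑ j, ∑ d' ∈ t, F i d * G j d' * k d d' :=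
        Finset.sum_congr rfl fun i _ => Finset.sum_comm
    _ = ∑ d ∈ s, ∑ i, ∑ j, ∑ d' ∈ t, F i d * G j d' * k d d' := Finset.sum_comm
    _ = ∑ d ∈ s, ∑ d' ∈ t, (∑ i, F i d) * (∑ j, G j d') * k d d' := by
        refine Finset.sum_congr rfl fun d _ => ?_
        exact st17_dsum1 t (fun i _ => F i d) G (fun d' => k d d')

lemma st17_dsum1' (s : Finset ℕ) (X : Fin n → Fin n → ℝ) (F G : Fin n → ℕ → ℝ) (k : ℕ → ℝ)
    (h : ∀ i j, X i j = ∑ d ∈ s, F i d * G j d * k d) :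
    ∑ i, ∑ j, X i j = ∑ d ∈ s, (∑ i, F i d) * (∑ j, G j d) * k d := by
  calc ∑ i, ∑ j, X i j = ∑ i, ∑ j, ∑ d ∈ s, F i d * G j d * k d :=
        Finset.sum_congr rfl fun i _ => Finset.sum_congr rfl fun j _ => h i j
    _ = _ := st17_dsum1 s F G k

lemma st17_dsum2' (s t : Finset ℕ) (X : Fin n → Fin n → ℝ) (F G : Fin n → ℕ → ℝ)
    (k : ℕ → ℕ → ℝ)
    (h : ∀ i j, X i j = ∑ d ∈ s, ∑ d' ∈ t, F i d * G j d' * k d d') :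
    ∑ i, ∑ j, X i j = ∑ d ∈ s, ∑ d' ∈ t, (∑ i, F i d) * (∑ j, G j d') * k d d' := by
  calc ∑ i, ∑ j, X i j = ∑ i, ∑ j, ∑ d ∈ s, ∑ d' ∈ t, F i d * G j d' * k d d' :=
        Finset.sum_congr rfl fun i _ => Finset.sum_congr rfl fun j _ => h i j
    _ = _ := st17_dsum2 s t F G k

end dsums

/-- The quadratic form of the prior covariance. -/
noncomputable def Qf (m : ℕ) (σαα σαβ σββ : ℝ) (σαΓ σβΓ : ℕ → ℝ) (σΓΓ : ℕ → ℕ → ℝ)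
    (a b : ℝ) (c : ℕ → ℝ) : ℝ :=
  a ^ 2 * σαα + 2 * a * b * σαβ + b ^ 2 * σββ
    + 2 * a * ∑ d ∈ Finset.Icc 1 m, c d * σαΓ d
    + 2 * b * ∑ d ∈ Finset.Icc 1 m, c d * σβΓ d
    + ∑ d ∈ Finset.Icc 1 m, ∑ d' ∈ Finset.Icc 1 m, c d * c d' * σΓΓ d d'

lemma st17_lemA {n : ℕ} (g : Fin n → Fin n → Bool) (hloop : ∀ i, g i i = false)
    (σαα σαβ σββ : ℝ) (σαΓ σβΓ : ℕ → ℝ) (σΓΓ : ℕ → ℕ → ℝ)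
    (hΓΓsym : ∀ d d', σΓΓ d d' = σΓΓ d' d)
    (hΓ0 : σαΓ 0 = 0 ∧ σβΓ 0 = 0 ∧ ∀ d, σΓΓ d 0 = 0)
    (z : Fin n → Bool) (v : Fin n → ℝ) :
    ∑ i, ∑ j, v i * v j *
      (σαα + ((if z i then (1:ℝ) else 0) + (if z j then (1:ℝ) else 0)) * σαβ
        + (if z i then (1:ℝ) else 0) * (if z j then (1:ℝ) else 0) * σββ
        + σΓΓ (trDeg g z i) (trDeg g z j)
        + (if z i then (1:ℝ) else 0) * σβΓ (trDeg g z j)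
        + (if z j then (1:ℝ) else 0) * σβΓ (trDeg g z i)
        + σαΓ (trDeg g z i) + σαΓ (trDeg g z j))
    = Qf (n-1) σαα σαβ σββ σαΓ σβΓ σΓΓ (∑ i, v i)
        (∑ i, v i * (if z i then (1:ℝ) else 0))
        (fun d => ∑ i, v i * (if trDeg g z i = d then (1:ℝ) else 0)) := by
  set Z : Fin n → ℝ := fun i => if z i then (1:ℝ) else 0 with hZ
  set φ : Fin n → ℕ → ℝ := fun i d => if trDeg g z i = d then (1:ℝ) else 0 with hφ
  set I := Finset.Icc 1 (n-1) with hI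
  have hle : ∀ i, trDeg g z i ≤ n - 1 := st17_trDeg_le g hloop z
  have eβ : ∀ i : Fin n, σβΓ (trDeg g z i) = ∑ d ∈ I, φ i d * σβΓ d := fun i =>
    (st17_sum_ind (n-1) σβΓ hΓ0.2.1 _ (hle i)).symm
  have eα : ∀ i : Fin n, σαΓ (trDeg g z i) = ∑ d ∈ I, φ i d * σαΓ d := fun i =>
    (st17_sum_ind (n-1) σαΓ hΓ0.1 _ (hle i)).symm
  have eΓ : ∀ i j : Fin n, σΓΓ (trDeg g z i) (trDeg g z j)
      = ∑ d ∈ I, ∑ d' ∈ I, (φ i d * φ j d') * σΓΓ d d' := by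
    intro i j
    rw [← st17_sum_ind (n-1) (fun d => σΓΓ d (trDeg g z j))
      (by show σΓΓ 0 (trDeg g z j) = 0; rw [hΓΓsym]; exact hΓ0.2.2 _) (trDeg g z i) (hle i)]
    refine Finset.sum_congr rfl fun d _ => ?_
    rw [← st17_sum_ind (n-1) (fun d' => σΓΓ d d') (hΓ0.2.2 d) (trDeg g z j) (hle j),
      Finset.mul_sum]
    exact Finset.sum_congr rfl fun d' _ => by ring
  have split : ∀ i j : Fin n, v i * v j *
      (σαα + (Z i + Z j) * σαβ + Z i * Z j * σββ
        + σΓΓ (trDeg g z i) (trDeg g z j)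
        + Z i * σβΓ (trDeg g z j) + Z j * σβΓ (trDeg g z i)
        + σαΓ (trDeg g z i) + σαΓ (trDeg g z j))
      = v i * v j * σαα
      + (v i * Z i) * (v j) * σαβ
      + (v i) * (v j * Z j) * σαβ
      + (v i * Z i) * (v j * Z j) * σββ
      + v i * v j * σΓΓ (trDeg g z i) (trDeg g z j)
      + v i * v j * (Z i * σβΓ (trDeg g z j))
      + v i * v j * (Z j * σβΓ (trDeg g z i))
      + v i * v j * σαΓ (trDeg g z i)
      + v i * v j * σαΓ (trDeg g z j) := by
    intro i j; ring
  rw [Finset.sum_congr rfl fun i _ => Finset.sum_congr rfl fun j _ => split i j]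
  simp only [Finset.sum_add_distrib]
  rw [st17_dsum0 v v σαα, st17_dsum0 (fun i => v i * Z i) v σαβ,
    st17_dsum0 v (fun j => v j * Z j) σαβ,
    st17_dsum0 (fun i => v i * Z i) (fun j => v j * Z j) σββ]
  rw [st17_dsum2' I I _ (fun i d => v i * φ i d) (fun j d' => v j * φ j d') σΓΓ
    (fun i j => by rw [eΓ i j]
                   simp only [Finset.mul_sum]
                   exact Finset.sum_congr rfl fun d _ =>
                     Finset.sum_congr rfl fun d' _ => by ring)]
  rw [st17_dsum1' I _ (fun i _ => v i * Z i) (fun j d => v j * φ j d) σβΓ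
    (fun i j => by rw [eβ j]
                   simp only [Finset.mul_sum]
                   exact Finset.sum_congr rfl fun d _ => by ring)]
  rw [st17_dsum1' I _ (fun i d => v i * φ i d) (fun j _ => v j * Z j) σβΓ
    (fun i j => by rw [eβ i]
                   simp only [Finset.mul_sum]
                   exact Finset.sum_congr rfl fun d _ => by ring)]
  rw [st17_dsum1' I _ (fun i d => v i * φ i d) (fun j _ => v j) σαΓ
    (fun i j => by rw [eα i]
                   simp only [Finset.mul_sum]
                   exact Finset.sum_congr rfl fun d _ => by ring)]
  rw [st17_dsum1' I _ (fun i _ => v i) (fun j d => v j * φ j d) σαΓ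
    (fun i j => by rw [eα j]
                   simp only [Finset.mul_sum]
                   exact Finset.sum_congr rfl fun d _ => by ring)]
  set A := ∑ i, v i with hA
  set B := ∑ i, v i * Z i with hB
  set Cc : ℕ → ℝ := fun d => ∑ i, v i * φ i d with hCc
  have m1 : ∑ d ∈ I, Cc d * B * σβΓ d = B * ∑ d ∈ I, Cc d * σβΓ d := by
    rw [Finset.mul_sum]; exact Finset.sum_congr rfl fun d _ => by ring
  have m2 : ∑ d ∈ I, B * Cc d * σβΓ d = B * ∑ d ∈ I, Cc d * σβΓ d := by
    rw [Finset.mul_sum]; exact Finset.sum_congr rfl fun d _ => by ring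
  have m3 : ∑ d ∈ I, Cc d * A * σαΓ d = A * ∑ d ∈ I, Cc d * σαΓ d := by
    rw [Finset.mul_sum]; exact Finset.sum_congr rfl fun d _ => by ring
  have m4 : ∑ d ∈ I, A * Cc d * σαΓ d = A * ∑ d ∈ I, Cc d * σαΓ d := by
    rw [Finset.mul_sum]; exact Finset.sum_congr rfl fun d _ => by ring
  rw [m1, m2, m3, m4]
  simp only [Qf]
  ring

section Qlemmas
variable (m : ℕ) (σαα σαβ σββ : ℝ) (σαΓ σβΓ : ℕ → ℝ) (σΓΓ : ℕ → ℕ → ℝ)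

lemma st17_Qshift (a b : ℝ) (c : ℕ → ℝ) :
    Qf m σαα σαβ σββ σαΓ σβΓ σΓΓ a b c
      = σββ + 2 * (a * σαβ + (b - 1) * σββ + ∑ d ∈ Finset.Icc 1 m, c d * σβΓ d)
        + Qf m σαα σαβ σββ σαΓ σβΓ σΓΓ a (b - 1) c := by
  unfold Qf
  ring

lemma st17_Qval (a b : ℝ) (c : ℕ → ℝ) (ha : a = 0) (hb : b = 1) (hc : ∀ d, c d = 0) :
    Qf m σαα σαβ σββ σαΓ σβΓ σΓΓ a b c = σββ := by
  subst ha hb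
  unfold Qf
  rw [Finset.sum_eq_zero (fun d _ => by rw [hc d]; ring),
    Finset.sum_eq_zero (fun d _ => by rw [hc d]; ring),
    Finset.sum_eq_zero (fun d _ => Finset.sum_eq_zero (fun d' _ => by rw [hc d]; ring))]
  ring

lemma st17_avgQ {X : Type*} [Fintype X] (p : X → ℝ) (A B : X → ℝ) (C : X → ℕ → ℝ) :
    ∑ z, p z * Qf m σαα σαβ σββ σαΓ σβΓ σΓΓ (A z) (B z) (C z)
      = (∑ z, p z) * σββ
        + 2 * σαβ * (∑ z, p z * A z)
        + 2 * σββ * ((∑ z, p z * B z) - ∑ z, p z)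
        + 2 * (∑ d ∈ Finset.Icc 1 m, σβΓ d * ∑ z, p z * C z d)
        + ∑ z, p z * Qf m σαα σαβ σββ σαΓ σβΓ σΓΓ (A z) (B z - 1) (C z) := by
  have step : ∀ z, p z * Qf m σαα σαβ σββ σαΓ σβΓ σΓΓ (A z) (B z) (C z)
      = p z * σββ + 2*σαβ*(p z * A z) + 2*σββ*(p z * B z - p z)
        + 2*(∑ d ∈ Finset.Icc 1 m, σβΓ d * (p z * C z d))
        + p z * Qf m σαα σαβ σββ σαΓ σβΓ σΓΓ (A z) (B z - 1) (C z) := by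
    intro z
    have hin : p z * (∑ d ∈ Finset.Icc 1 m, C z d * σβΓ d)
        = ∑ d ∈ Finset.Icc 1 m, σβΓ d * (p z * C z d) := by
      rw [Finset.mul_sum]
      exact Finset.sum_congr rfl fun d _ => by ring
    calc p z * Qf m σαα σαβ σββ σαΓ σβΓ σΓΓ (A z) (B z) (C z)
        = p z * (σββ + 2 * (A z * σαβ + (B z - 1) * σββ
            + ∑ d ∈ Finset.Icc 1 m, C z d * σβΓ d)
          + Qf m σαα σαβ σββ σαΓ σβΓ σΓΓ (A z) (B z - 1) (C z)) := by
          rw [← st17_Qshift]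
      _ = p z * σββ + 2*σαβ*(p z * A z) + 2*σββ*(p z * B z - p z)
          + 2*(p z * ∑ d ∈ Finset.Icc 1 m, C z d * σβΓ d)
          + p z * Qf m σαα σαβ σββ σαΓ σβΓ σΓΓ (A z) (B z - 1) (C z) := by ring
      _ = _ := by rw [hin]
  rw [Finset.sum_congr rfl fun z _ => step z]
  simp only [Finset.sum_add_distrib]
  have P1 : ∑ z, p z * σββ = (∑ z, p z) * σββ := (Finset.sum_mul _ _ _).symm
  have P2 : ∑ z, 2*σαβ*(p z * A z) = 2*σαβ*∑ z, p z * A z := (Finset.mul_sum _ _ _).symm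
  have P3 : ∑ z, 2*σββ*(p z * B z - p z)
      = 2*σββ*((∑ z, p z * B z) - ∑ z, p z) := by
    rw [← Finset.mul_sum, Finset.sum_sub_distrib]
  have P4 : ∑ z, 2*(∑ d ∈ Finset.Icc 1 m, σβΓ d * (p z * C z d))
      = 2*(∑ d ∈ Finset.Icc 1 m, σβΓ d * ∑ z, p z * C z d) := by
    rw [← Finset.mul_sum]
    congr 1
    rw [Finset.sum_comm]
    exact Finset.sum_congr rfl fun d _ => (Finset.mul_sum _ _ _).symm
  rw [P1, P2, P3, P4]

end Qlemmas

section wsfacts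
variable {n : ℕ} (g : Fin n → Fin n → Bool) (z : Fin n → Bool)

lemma st17_fib (hn : 1 ≤ n) (hloop : ∀ i, g i i = false) (a : Bool) (f : ℕ → ℝ) :
    ∑ i ∈ Finset.univ.filter (fun i => z i = a), f (trDeg g z i)
      = ∑ d ∈ Finset.range n, (ncount g z a d : ℝ) * f d := by
  rw [← Finset.sum_fiberwise_of_maps_to (g := fun i => trDeg g z i)
    (t := Finset.range n) (fun i _ => Finset.mem_range.2 (by
      show trDeg g z i < n
      have := st17_trDeg_le g hloop z i; omega))]
  refine Finset.sum_congr rfl fun d _ => ?_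
  have h1 : ∀ i ∈ (Finset.univ.filter (fun i => z i = a)).filter
      (fun i => trDeg g z i = d), f (trDeg g z i) = f d := by
    intro i hi
    simp only [Finset.mem_filter] at hi
    rw [hi.2]
  rw [Finset.sum_congr rfl h1, Finset.sum_const, nsmul_eq_mul]
  congr 2
  rw [ncount, Finset.filter_filter]

variable (CF : ℕ → ℝ) (ws : Fin n → ℝ)

def CFspec : Prop := ∀ d, CF d =
  if 0 < ncount g z false d ∧ 0 < ncount g z true d
  then ((1 / (ncount g z false d : ℝ)) + 1 / (ncount g z true d : ℝ))⁻¹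
  else 0

def wsspec : Prop := ∀ i, ws i =
  (CF (trDeg g z i) / ∑ d ∈ Finset.range n, CF d) *
    ((if z i then (2 : ℝ) else 0) - 1) / (ncount g z (z i) (trDeg g z i) : ℝ)

lemma st17_CFnn (hCF : CFspec g z CF) : ∀ d, 0 ≤ CF d := by
  intro d
  rw [hCF]
  split
  · rename_i h
    have h0 : (0:ℝ) < (ncount g z false d : ℝ) := by exact_mod_cast h.1
    have h1 : (0:ℝ) < (ncount g z true d : ℝ) := by exact_mod_cast h.2
    positivity
  · exact le_refl 0

lemma st17_CF0 (hCF : CFspec g z CF) :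
    ∀ d, (ncount g z false d = 0 ∨ ncount g z true d = 0) → CF d = 0 := by
  intro d h
  rw [hCF, if_neg]
  rintro ⟨h0, h1⟩
  rcases h with h | h <;> omega

lemma st17_Tpos (hCF : CFspec g z CF) (hn : 1 ≤ n) (hloop : ∀ i, g i i = false)
    (h : ∃ d, 0 < ncount g z false d ∧ 0 < ncount g z true d) :
    0 < ∑ d ∈ Finset.range n, CF d := by
  obtain ⟨d, h0, h1⟩ := h
  have hd : d ∈ Finset.range n := by
    obtain ⟨i, hi⟩ := Finset.card_pos.1 h1
    simp only [ncount, Finset.mem_filter] at hi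
    have := st17_trDeg_le g hloop z i
    refine Finset.mem_range.2 ?_
    omega
  refine Finset.sum_pos' (fun e _ => st17_CFnn g z CF hCF e) ⟨d, hd, ?_⟩
  rw [hCF, if_pos ⟨h0, h1⟩]
  have h0' : (0:ℝ) < (ncount g z false d : ℝ) := by exact_mod_cast h0
  have h1' : (0:ℝ) < (ncount g z true d : ℝ) := by exact_mod_cast h1
  positivity

lemma st17_masterT (hCF : CFspec g z CF) (hws : wsspec g z CF ws)
    (hn : 1 ≤ n) (hloop : ∀ i, g i i = false) (q : ℕ → ℝ) :
    ∑ i ∈ Finset.univ.filter (fun i => z i = true), ws i * q (trDeg g z i)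
      = ∑ d ∈ Finset.range n, (CF d / ∑ d' ∈ Finset.range n, CF d') * q d := by
  set T := ∑ d' ∈ Finset.range n, CF d' with hT
  have e1 : ∑ i ∈ Finset.univ.filter (fun i => z i = true), ws i * q (trDeg g z i)
      = ∑ d ∈ Finset.range n, (ncount g z true d : ℝ) *
          (CF d / T * ((2:ℝ) - 1) / (ncount g z true d : ℝ) * q d) := by
    rw [← st17_fib g z hn hloop true
      (fun d => CF d / T * ((2:ℝ) - 1) / (ncount g z true d : ℝ) * q d)]
    refine Finset.sum_congr rfl fun i hi => ?_
    have hz : z i = true := (Finset.mem_filter.1 hi).2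
    rw [hws i, hz]
    simp [hT]
  rw [e1]
  refine Finset.sum_congr rfl fun d _ => ?_
  by_cases h : ncount g z true d = 0
  · rw [st17_CF0 g z CF hCF d (Or.inr h), h]
    simp
  · have h' : ((ncount g z true d : ℝ)) ≠ 0 := Nat.cast_ne_zero.2 h
    have e2 : ((ncount g z true d : ℝ)) * (CF d / T * ((2:ℝ) - 1) / (ncount g z true d : ℝ) * q d)
        = ((ncount g z true d : ℝ) * ((ncount g z true d : ℝ))⁻¹) * (CF d / T * ((2:ℝ)-1) * q d) := by
      ring
    rw [e2, mul_inv_cancel₀ h', one_mul]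
    norm_num

lemma st17_masterC (hCF : CFspec g z CF) (hws : wsspec g z CF ws)
    (hn : 1 ≤ n) (hloop : ∀ i, g i i = false) (q : ℕ → ℝ) :
    ∑ i ∈ Finset.univ.filter (fun i => z i = false), ws i * q (trDeg g z i)
      = -∑ d ∈ Finset.range n, (CF d / ∑ d' ∈ Finset.range n, CF d') * q d := by
  set T := ∑ d' ∈ Finset.range n, CF d' with hT
  have e1 : ∑ i ∈ Finset.univ.filter (fun i => z i = false), ws i * q (trDeg g z i)
      = ∑ d ∈ Finset.range n, (ncount g z false d : ℝ) *
          (CF d / T * ((0:ℝ) - 1) / (ncount g z false d : ℝ) * q d) := by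
    rw [← st17_fib g z hn hloop false
      (fun d => CF d / T * ((0:ℝ) - 1) / (ncount g z false d : ℝ) * q d)]
    refine Finset.sum_congr rfl fun i hi => ?_
    have hz : z i = false := (Finset.mem_filter.1 hi).2
    rw [hws i, hz]
    simp [hT]
  rw [e1, ← Finset.sum_neg_distrib]
  refine Finset.sum_congr rfl fun d _ => ?_
  by_cases h : ncount g z false d = 0
  · rw [st17_CF0 g z CF hCF d (Or.inl h), h]
    simp
  · have h' : ((ncount g z false d : ℝ)) ≠ 0 := Nat.cast_ne_zero.2 h
    have e2 : ((ncount g z false d : ℝ)) * (CF d / T * ((0:ℝ) - 1) / (ncount g z false d : ℝ) * q d)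
        = ((ncount g z false d : ℝ) * ((ncount g z false d : ℝ))⁻¹) * (CF d / T * ((0:ℝ)-1) * q d) := by
      ring
    rw [e2, mul_inv_cancel₀ h', one_mul]
    ring

lemma st17_factA (hCF : CFspec g z CF) (hws : wsspec g z CF ws)
    (hn : 1 ≤ n) (hloop : ∀ i, g i i = false) : ∑ i, ws i = 0 := by
  have t := st17_masterT g z CF ws hCF hws hn hloop (fun _ => (1:ℝ))
  have c := st17_masterC g z CF ws hCF hws hn hloop (fun _ => (1:ℝ))
  simp only [mul_one] at t c
  rw [← Finset.sum_filter_add_sum_filter_not Finset.univ (fun i => z i = true) ws]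
  have e : Finset.univ.filter (fun i => ¬ z i = true)
      = Finset.univ.filter (fun i => z i = false) := by
    apply Finset.filter_congr
    intro i _
    simp
  rw [t, e, c]
  ring

lemma st17_factB (hCF : CFspec g z CF) (hws : wsspec g z CF ws)
    (hn : 1 ≤ n) (hloop : ∀ i, g i i = false)
    (hT : (∑ d ∈ Finset.range n, CF d) ≠ 0) :
    ∑ i, ws i * (if z i then (1:ℝ) else 0) = 1 := by
  have split0 : ∀ i, ws i * (if z i then (1:ℝ) else 0)
      = if z i = true then ws i else 0 := by
    intro i
    by_cases h : z i <;> simp [h]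
  rw [Finset.sum_congr rfl (fun i _ => split0 i), ← Finset.sum_filter]
  have t := st17_masterT g z CF ws hCF hws hn hloop (fun _ => (1:ℝ))
  simp only [mul_one] at t
  rw [t, ← Finset.sum_div, div_self hT]

lemma st17_factC (hCF : CFspec g z CF) (hws : wsspec g z CF ws)
    (hn : 1 ≤ n) (hloop : ∀ i, g i i = false) (d0 : ℕ) :
    ∑ i, ws i * (if trDeg g z i = d0 then (1:ℝ) else 0) = 0 := by
  have t := st17_masterT g z CF ws hCF hws hn hloop (fun t => if t = d0 then (1:ℝ) else 0)
  have c := st17_masterC g z CF ws hCF hws hn hloop (fun t => if t = d0 then (1:ℝ) else 0)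
  rw [← Finset.sum_filter_add_sum_filter_not Finset.univ (fun i => z i = true)
    (fun i => ws i * (if trDeg g z i = d0 then (1:ℝ) else 0))]
  have e : Finset.univ.filter (fun i => ¬ z i = true)
      = Finset.univ.filter (fun i => z i = false) := by
    apply Finset.filter_congr
    intro i _
    simp
  rw [t, e, c]
  ring

end wsfacts

section autlemmas
variable {n : ℕ} (g : Fin n → Fin n → Bool) (τ : Equiv.Perm (Fin n)) (z : Fin n → Bool)

lemma st17_trDeg_aut (hτ : IsAut g τ) (i : Fin n) :
    trDeg g (fun k => z (τ.symm k)) (τ i) = trDeg g z i := by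
  unfold trDeg
  apply Finset.card_bij' (fun j _ => τ.symm j) (fun j _ => τ j)
  · intro j hj
    simp only [Finset.mem_filter, Finset.mem_univ, true_and] at hj ⊢
    have : g (τ.symm j) i = g j (τ i) := by
      rw [hτ (τ.symm j) i, Equiv.apply_symm_apply]
    rw [this]
    exact hj
  · intro j hj
    simp only [Finset.mem_filter, Finset.mem_univ, true_and] at hj ⊢
    constructor
    · rw [← hτ j i]
      exact hj.1
    · rw [Equiv.symm_apply_apply]
      exact hj.2
  · intro j _
    exact Equiv.apply_symm_apply τ j
  · intro j _
    exact Equiv.symm_apply_apply τ j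

lemma st17_ncount_aut (hτ : IsAut g τ) (a : Bool) (d : ℕ) :
    ncount g (fun k => z (τ.symm k)) a d = ncount g z a d := by
  unfold ncount
  apply Finset.card_bij' (fun i _ => τ.symm i) (fun i _ => τ i)
  · intro i hi
    simp only [Finset.mem_filter, Finset.mem_univ, true_and] at hi ⊢
    have h2 : trDeg g (fun k => z (τ.symm k)) i = trDeg g z (τ.symm i) := by
      rw [← st17_trDeg_aut g τ z hτ (τ.symm i), Equiv.apply_symm_apply]
    constructor
    · exact hi.1
    · rw [← h2]
      exact hi.2
  · intro i hi
    simp only [Finset.mem_filter, Finset.mem_univ, true_and] at hi ⊢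
    constructor
    · rw [Equiv.symm_apply_apply]
      exact hi.1
    · rw [st17_trDeg_aut g τ z hτ i]
      exact hi.2
  · intro i _
    exact Equiv.apply_symm_apply τ i
  · intro i _
    exact Equiv.symm_apply_apply τ i

end autlemmas

/-- vertex-transitive graphs, constant prior: for a vertex-transitive
undirected simple graph, an automorphism-invariant design placing no mass on
allocations whose treated and control treated-degree sets are disjoint, and a
constant (across units) mean-zero prior with positive semidefinite covariance `S`,
the stratified naive weights satisfy the SANIA unbiasedness constraints C1, C2, C3′
and minimize `IV(w) = ∑_z p(z) ∑_{i,j} wᵢ(z) wⱼ(z) Σ(z)_{ij}` among all weights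
satisfying those constraints. -/
theorem stmt_17 (n : ℕ) (hn : 2 ≤ n)
    (g : Fin n → Fin n → Bool)
    (hsym : ∀ i j, g i j = g j i) (hloop : ∀ i, g i i = false)
    (hvt : ∀ i j : Fin n, ∃ τ : Equiv.Perm (Fin n), IsAut g τ ∧ τ i = j)
    (p : (Fin n → Bool) → ℝ) (hp0 : ∀ z, 0 ≤ p z) (hp1 : ∑ z, p z = 1)
    -- (1) the design is invariant under automorphisms of `g`
    (hpaut : ∀ τ : Equiv.Perm (Fin n), IsAut g τ →
      ∀ z : Fin n → Bool, p (fun i => z (τ.symm i)) = p z)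
    -- (2) allocations with disjoint treated-degree sets for treated/control units
    -- are excluded from the support
    (hpbal : ∀ z : Fin n → Bool,
      (¬ ∃ d : ℕ, (∃ i, z i = false ∧ trDeg g z i = d) ∧
        (∃ i, z i = true ∧ trDeg g z i = d)) → p z = 0)
    -- entries of the prior covariance `S`, with `σ_{ξ,Γ(0)} = 0`
    (σαα σαβ σββ : ℝ) (σαΓ σβΓ : ℕ → ℝ) (σΓΓ : ℕ → ℕ → ℝ)
    (hΓΓsym : ∀ d d', σΓΓ d d' = σΓΓ d' d)
    (hΓ0 : σαΓ 0 = 0 ∧ σβΓ 0 = 0 ∧ ∀ d, σΓΓ d 0 = 0)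
    -- positive semidefiniteness of `S`, expressed via its quadratic form on
    -- (α, β, Γ(1), …, Γ(n-1))
    (hPSD : ∀ (a b : ℝ) (c : ℕ → ℝ),
      0 ≤ a ^ 2 * σαα + 2 * a * b * σαβ + b ^ 2 * σββ
        + 2 * a * ∑ d ∈ Finset.Icc 1 (n - 1), c d * σαΓ d
        + 2 * b * ∑ d ∈ Finset.Icc 1 (n - 1), c d * σβΓ d
        + ∑ d ∈ Finset.Icc 1 (n - 1), ∑ d' ∈ Finset.Icc 1 (n - 1),
            c d * c d' * σΓΓ d d')
    -- the covariance matrix `Σ(z)` of the observed outcomes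
    (Sig : (Fin n → Bool) → Fin n → Fin n → ℝ)
    (hSig : ∀ z i j, Sig z i j =
      σαα + ((if z i then (1 : ℝ) else 0) + (if z j then (1 : ℝ) else 0)) * σαβ
        + (if z i then (1 : ℝ) else 0) * (if z j then (1 : ℝ) else 0) * σββ
        + σΓΓ (trDeg g z i) (trDeg g z j)
        + (if z i then (1 : ℝ) else 0) * σβΓ (trDeg g z j)
        + (if z j then (1 : ℝ) else 0) * σβΓ (trDeg g z i)
        + σαΓ (trDeg g z i) + σαΓ (trDeg g z j))
    -- the strata weights `C_d(z)`
    (Cd : (Fin n → Bool) → ℕ → ℝ)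
    (hCd : ∀ z d, Cd z d =
      if 0 < ncount g z false d ∧ 0 < ncount g z true d
      then ((1 / (ncount g z false d : ℝ)) + 1 / (ncount g z true d : ℝ))⁻¹
      else 0)
    -- the stratified naive weights
    (wstar : Fin n → (Fin n → Bool) → ℝ)
    (hws : ∀ i z, wstar i z =
      (Cd z (trDeg g z i) / ∑ d ∈ Finset.range n, Cd z d) *
        ((if z i then (2 : ℝ) else 0) - 1) / (ncount g z (z i) (trDeg g z i) : ℝ)) :
    ((∀ i : Fin n,
        (∑ z, p z * wstar i z * (if z i then (1 : ℝ) else 0)) = 1 / (n : ℝ) ∧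
        (∑ z, p z * wstar i z) = 0 ∧
        (∀ d : ℕ, 1 ≤ d →
          (∑ z, p z * wstar i z * (if trDeg g z i = d then (1 : ℝ) else 0)) = 0)) ∧
      (∀ w : Fin n → (Fin n → Bool) → ℝ,
        (∀ i : Fin n,
          (∑ z, p z * w i z * (if z i then (1 : ℝ) else 0)) = 1 / (n : ℝ) ∧
          (∑ z, p z * w i z) = 0 ∧
          (∀ d : ℕ, 1 ≤ d →
            (∑ z, p z * w i z * (if trDeg g z i = d then (1 : ℝ) else 0)) = 0)) →
        (∑ z, p z * ∑ i, ∑ j, wstar i z * wstar j z * Sig z i j) ≤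
          (∑ z, p z * ∑ i, ∑ j, w i z * w j z * Sig z i j))) := by
  have hn1 : 1 ≤ n := by omega
  have hnne : (n:ℝ) ≠ 0 := Nat.cast_ne_zero.2 (by omega)
  have hCFspec : ∀ z, CFspec g z (Cd z) := fun z d => hCd z d
  have hwsspec : ∀ z, wsspec g z (Cd z) (fun i => wstar i z) := fun z i => hws i z
  have hsupp : ∀ z : Fin n → Bool, p z ≠ 0 → (∑ d ∈ Finset.range n, Cd z d) ≠ 0 := by
    intro z hz
    have hb : ∃ d, 0 < ncount g z false d ∧ 0 < ncount g z true d := by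
      by_contra hcon
      refine hz (hpbal z ?_)
      rintro ⟨d, ⟨i, hi0, hid⟩, ⟨j, hj1, hjd⟩⟩
      refine hcon ⟨d, ?_, ?_⟩
      · exact Finset.card_pos.2 ⟨i, Finset.mem_filter.2 ⟨Finset.mem_univ i, hi0, hid⟩⟩
      · exact Finset.card_pos.2 ⟨j, Finset.mem_filter.2 ⟨Finset.mem_univ j, hj1, hjd⟩⟩
    exact ne_of_gt (st17_Tpos g z (Cd z) (hCFspec z) hn1 hloop hb)
  have hafact : ∀ z, ∑ i, wstar i z = 0 :=
    fun z => st17_factA g z (Cd z) (fun i => wstar i z) (hCFspec z) (hwsspec z) hn1 hloop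
  have hbfact : ∀ z, p z ≠ 0 → ∑ i, wstar i z * (if z i then (1:ℝ) else 0) = 1 :=
    fun z hz => st17_factB g z (Cd z) (fun i => wstar i z) (hCFspec z) (hwsspec z) hn1 hloop
      (hsupp z hz)
  have hcfact : ∀ (z : Fin n → Bool) (d : ℕ),
      ∑ i, wstar i z * (if trDeg g z i = d then (1:ℝ) else 0) = 0 :=
    fun z d => st17_factC g z (Cd z) (fun i => wstar i z) (hCFspec z) (hwsspec z) hn1 hloop d
  -- invariance of the stratified naive weights under automorphisms
  have wstar_aut : ∀ τ : Equiv.Perm (Fin n), IsAut g τ → ∀ (z : Fin n → Bool) (i : Fin n),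
      wstar (τ i) (fun k => z (τ.symm k)) = wstar i z := by
    intro τ hτ z i
    have h3 : ∀ d, Cd (fun k => z (τ.symm k)) d = Cd z d := fun d => by
      rw [hCd, hCd, st17_ncount_aut g τ z hτ, st17_ncount_aut g τ z hτ]
    rw [hws (τ i) (fun k => z (τ.symm k)), hws i z]
    simp only [st17_trDeg_aut g τ z hτ i, h3, st17_ncount_aut g τ z hτ,
      Equiv.symm_apply_apply]
  have const : ∀ (ψ : (Fin n → Bool) → Fin n → ℝ),
      (∀ τ : Equiv.Perm (Fin n), IsAut g τ →
        ∀ z i, ψ (fun k => z (τ.symm k)) (τ i) = ψ z i) →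
      ∀ i j : Fin n, (∑ z, p z * ψ z i) = ∑ z, p z * ψ z j := by
    intro ψ hψ i j
    obtain ⟨τ, hτ, hij⟩ := hvt i j
    subst hij
    calc (∑ z, p z * ψ z i)
        = ∑ z, p ((Equiv.arrowCongr τ (Equiv.refl Bool)) z)
            * ψ ((Equiv.arrowCongr τ (Equiv.refl Bool)) z) (τ i) := by
          refine Finset.sum_congr rfl fun z _ => ?_
          have h1 : ((Equiv.arrowCongr τ (Equiv.refl Bool)) z) = fun k => z (τ.symm k) := rfl
          rw [h1, hpaut τ hτ z, hψ τ hτ z i]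
      _ = ∑ z, p z * ψ z (τ i) :=
          Equiv.sum_comp (Equiv.arrowCongr τ (Equiv.refl Bool)) (fun z => p z * ψ z (τ i))
  have key1 : ∀ (ψ : (Fin n → Bool) → Fin n → ℝ),
      (∀ τ : Equiv.Perm (Fin n), IsAut g τ →
        ∀ z i, ψ (fun k => z (τ.symm k)) (τ i) = ψ z i) →
      ∀ (r : ℝ), ((∑ z, p z * ∑ i, ψ z i) = (n:ℝ) * r) →
      ∀ i, (∑ z, p z * ψ z i) = r := by
    intro ψ hψ r hr i
    have h1 : ∑ j, ∑ z, p z * ψ z j = (n:ℝ) * (∑ z, p z * ψ z i) := by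
      rw [Finset.sum_congr rfl (fun j _ => const ψ hψ j i), Finset.sum_const,
        Finset.card_univ, Fintype.card_fin, nsmul_eq_mul]
    have h2 : ∑ j, ∑ z, p z * ψ z j = ∑ z, p z * ∑ i, ψ z i := by
      rw [Finset.sum_comm]
      exact Finset.sum_congr rfl fun z _ => (Finset.mul_sum _ _ _).symm
    exact mul_left_cancel₀ hnne (h1.symm.trans (h2.trans hr))
  constructor
  · -- Part 1: unbiasedness constraints
    intro i
    refine ⟨?_, ?_, ?_⟩
    · have hr : (∑ z, p z * ∑ i, wstar i z * (if z i then (1:ℝ) else 0))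
          = (n:ℝ) * (1/(n:ℝ)) := by
        have e : ∀ z : Fin n → Bool,
            p z * (∑ i, wstar i z * (if z i then (1:ℝ) else 0)) = p z := by
          intro z
          by_cases hz : p z = 0
          · rw [hz, zero_mul]
          · rw [hbfact z hz, mul_one]
        rw [Finset.sum_congr rfl fun z _ => e z, hp1]
        field_simp
      have h := key1 (fun z i => wstar i z * (if z i then (1:ℝ) else 0))
        (fun τ hτ z i => by
          simp only [wstar_aut τ hτ z i, Equiv.symm_apply_apply]) (1/(n:ℝ)) hr i
      calc (∑ z, p z * wstar i z * (if z i then (1:ℝ) else 0))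
          = ∑ z, p z * (wstar i z * (if z i then (1:ℝ) else 0)) :=
            Finset.sum_congr rfl fun z _ => mul_assoc _ _ _
        _ = 1/(n:ℝ) := h
    · have hr : (∑ z, p z * ∑ i, wstar i z) = (n:ℝ) * 0 := by
        have e : ∀ z : Fin n → Bool, p z * (∑ i, wstar i z) = 0 := by
          intro z
          rw [hafact z, mul_zero]
        rw [Finset.sum_congr rfl fun z _ => e z, Finset.sum_const, smul_zero, mul_zero]
      exact key1 (fun z i => wstar i z) (fun τ hτ z i => wstar_aut τ hτ z i) 0 hr i
    · intro d hd
      have hr : (∑ z, p z * ∑ i, wstar i z * (if trDeg g z i = d then (1:ℝ) else 0))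
          = (n:ℝ) * 0 := by
        have e : ∀ z : Fin n → Bool,
            p z * (∑ i, wstar i z * (if trDeg g z i = d then (1:ℝ) else 0)) = 0 := by
          intro z
          rw [hcfact z d, mul_zero]
        rw [Finset.sum_congr rfl fun z _ => e z, Finset.sum_const, smul_zero, mul_zero]
      have h := key1 (fun z i => wstar i z * (if trDeg g z i = d then (1:ℝ) else 0))
        (fun τ hτ z i => by
          simp only [wstar_aut τ hτ z i, st17_trDeg_aut g τ z hτ i]) 0 hr i
      calc (∑ z, p z * wstar i z * (if trDeg g z i = d then (1:ℝ) else 0))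
          = ∑ z, p z * (wstar i z * (if trDeg g z i = d then (1:ℝ) else 0)) :=
            Finset.sum_congr rfl fun z _ => mul_assoc _ _ _
        _ = 0 := h
  · -- Part 2: optimality
    intro w hw
    have stepA : ∀ (u : Fin n → (Fin n → Bool) → ℝ) (z : Fin n → Bool),
        ∑ i, ∑ j, u i z * u j z * Sig z i j
          = Qf (n-1) σαα σαβ σββ σαΓ σβΓ σΓΓ (∑ i, u i z)
              (∑ i, u i z * (if z i then (1:ℝ) else 0))
              (fun d => ∑ i, u i z * (if trDeg g z i = d then (1:ℝ) else 0)) := by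
      intro u z
      have h := st17_lemA g hloop σαα σαβ σββ σαΓ σβΓ σΓΓ hΓΓsym hΓ0 z (fun i => u i z)
      simp only [hSig]
      exact h
    have hLHS : (∑ z, p z * ∑ i, ∑ j, wstar i z * wstar j z * Sig z i j) = σββ := by
      have e : ∀ z : Fin n → Bool,
          p z * ∑ i, ∑ j, wstar i z * wstar j z * Sig z i j = p z * σββ := by
        intro z
        by_cases hz : p z = 0
        · rw [hz, zero_mul, zero_mul]
        · rw [stepA wstar z,
            st17_Qval (n-1) σαα σαβ σββ σαΓ σβΓ σΓΓ _ _ _ (hafact z) (hbfact z hz)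
              (hcfact z)]
      rw [Finset.sum_congr rfl fun z _ => e z, ← Finset.sum_mul, hp1, one_mul]
    have cA : (∑ z, p z * ∑ i, w i z) = 0 := by
      have e1 : ∀ z : Fin n → Bool, p z * ∑ i, w i z = ∑ i, p z * w i z :=
        fun z => Finset.mul_sum _ _ _
      rw [Finset.sum_congr rfl fun z _ => e1 z, Finset.sum_comm,
        Finset.sum_congr rfl (fun i _ => (hw i).2.1), Finset.sum_const, smul_zero]
    have cB : (∑ z, p z * ∑ i, w i z * (if z i then (1:ℝ) else 0)) = 1 := by
      have e1 : ∀ z : Fin n → Bool, p z * ∑ i, w i z * (if z i then (1:ℝ) else 0)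
          = ∑ i, p z * w i z * (if z i then (1:ℝ) else 0) := by
        intro z
        rw [Finset.mul_sum]
        exact Finset.sum_congr rfl fun i _ => by ring
      rw [Finset.sum_congr rfl fun z _ => e1 z, Finset.sum_comm,
        Finset.sum_congr rfl (fun i _ => (hw i).1), Finset.sum_const,
        Finset.card_univ, Fintype.card_fin, nsmul_eq_mul, mul_one_div, div_self hnne]
    have cC : ∀ d ∈ Finset.Icc 1 (n-1),
        (∑ z, p z * ∑ i, w i z * (if trDeg g z i = d then (1:ℝ) else 0)) = 0 := by
      intro d hd
      have hd1 : 1 ≤ d := (Finset.mem_Icc.1 hd).1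
      have e1 : ∀ z : Fin n → Bool,
          p z * ∑ i, w i z * (if trDeg g z i = d then (1:ℝ) else 0)
          = ∑ i, p z * w i z * (if trDeg g z i = d then (1:ℝ) else 0) := by
        intro z
        rw [Finset.mul_sum]
        exact Finset.sum_congr rfl fun i _ => by ring
      rw [Finset.sum_congr rfl fun z _ => e1 z, Finset.sum_comm,
        Finset.sum_congr rfl (fun i _ => (hw i).2.2 d hd1), Finset.sum_const, smul_zero]
    have hRHS : (∑ z, p z * ∑ i, ∑ j, w i z * w j z * Sig z i j)
        = σββ + ∑ z, p z * Qf (n-1) σαα σαβ σββ σαΓ σβΓ σΓΓ (∑ i, w i z)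
            ((∑ i, w i z * (if z i then (1:ℝ) else 0)) - 1)
            (fun d => ∑ i, w i z * (if trDeg g z i = d then (1:ℝ) else 0)) := by
      have eW : (∑ z, p z * ∑ i, ∑ j, w i z * w j z * Sig z i j)
          = ∑ z, p z * Qf (n-1) σαα σαβ σββ σαΓ σβΓ σΓΓ
              ((fun z => ∑ i, w i z) z)
              ((fun z => ∑ i, w i z * (if z i then (1:ℝ) else 0)) z)
              ((fun z d => ∑ i, w i z * (if trDeg g z i = d then (1:ℝ) else 0)) z) :=
        Finset.sum_congr rfl fun z _ => congrArg (fun t => p z * t) (stepA w z)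
      rw [eW, st17_avgQ (n-1) σαα σαβ σββ σαΓ σβΓ σΓΓ p (fun z => ∑ i, w i z)
        (fun z => ∑ i, w i z * (if z i then (1:ℝ) else 0))
        (fun z d => ∑ i, w i z * (if trDeg g z i = d then (1:ℝ) else 0))]
      rw [cA, cB, hp1, Finset.sum_eq_zero (fun d hd => by rw [cC d hd, mul_zero])]
      ring
    rw [hLHS, hRHS]
    have nonneg : 0 ≤ ∑ z, p z * Qf (n-1) σαα σαβ σββ σαΓ σβΓ σΓΓ (∑ i, w i z)
        ((∑ i, w i z * (if z i then (1:ℝ) else 0)) - 1)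
        (fun d => ∑ i, w i z * (if trDeg g z i = d then (1:ℝ) else 0)) := by
      refine Finset.sum_nonneg fun z _ => mul_nonneg (hp0 z) ?_
      have h := hPSD (∑ i, w i z) ((∑ i, w i z * (if z i then (1:ℝ) else 0)) - 1)
        (fun d => ∑ i, w i z * (if trDeg g z i = d then (1:ℝ) else 0))
      unfold Qf
      exact h
    linarith
end

section
/- Let g be a vertex-transitive finite simple graph on [n] with automorphism group T, and fix an allocation z* ∈ {0,1}^n. Let τ be drawn uniformly at random from T and set z^{obs} = τ·z*, where (τ·z*)_i = z*_{τ^{-1}(i)}. Then for every unit i, every a ∈ {0,1}, and every d: Pr[z^{obs}_i = a and d_i^{z^{obs}} = d] = n_{a,d}(z*)/n, where n_{a,d}(z*) = |{j ∈ [n] : z*_j = a and d_j^{z*} = d}| and d_j^{z} = ∑_k g_{kj} z_k is the treated degree of unit j under allocation z (so the number of neighbors of j assigned 1 by z). -/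
open Finset
open scoped Classical

/-- The action of an automorphism on an allocation: `(τ·z)ᵢ = z_{τ⁻¹(i)}`. -/
def actAlloc {n : ℕ} (τ : Equiv.Perm (Fin n)) (z : Fin n → Bool) : Fin n → Bool :=
  fun i => z (τ.symm i)

lemma trDeg_act {n : ℕ} (g : Fin n → Fin n → Bool) (τ : Equiv.Perm (Fin n))
    (h : IsAut g τ) (z : Fin n → Bool) (i : Fin n) :
    trDeg g (actAlloc τ z) i = trDeg g z (τ.symm i) := by
  unfold trDeg actAlloc
  apply Finset.card_bij' (fun j _ => τ.symm j) (fun j _ => τ j)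
  · intro j hj
    simp only [mem_filter, mem_univ, true_and] at hj ⊢
    refine ⟨?_, hj.2⟩
    have h2 : g (τ.symm j) (τ.symm i) = g j i := by
      simpa using h (τ.symm j) (τ.symm i)
    exact h2.trans hj.1
  · intro j hj
    simp only [mem_filter, mem_univ, true_and] at hj ⊢
    refine ⟨?_, by simpa using hj.2⟩
    have h2 : g j (τ.symm i) = g (τ j) i := by
      simpa using h j (τ.symm i)
    exact h2.symm.trans hj.1
  · intro j _; simp
  · intro j _; simp

/-- for a vertex-transitive finite simple graph `g` and a fixed
allocation `z*`, if `τ` is drawn uniformly from the automorphism group of `g` and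
`z^{obs} = τ·z*`, then for every unit `i`, `a ∈ {0,1}` and `d`,
`Pr[z^{obs}ᵢ = a ∧ dᵢ^{z^{obs}} = d] = n_{a,d}(z*)/n`. -/
theorem stmt_19 (n : ℕ) (hn : 1 ≤ n)
    (g : Fin n → Fin n → Bool)
    (hsym : ∀ i j, g i j = g j i) (hloop : ∀ i, g i i = false)
    (hvt : ∀ i j : Fin n, ∃ τ : Equiv.Perm (Fin n), IsAut g τ ∧ τ i = j)
    (zstar : Fin n → Bool) (i : Fin n) (a : Bool) (d : ℕ) :
    ((Finset.univ.filter fun τ : Equiv.Perm (Fin n) =>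
        IsAut g τ ∧ actAlloc τ zstar i = a ∧ trDeg g (actAlloc τ zstar) i = d).card : ℝ) /
      ((Finset.univ.filter fun τ : Equiv.Perm (Fin n) => IsAut g τ).card : ℝ)
    = ((Finset.univ.filter fun j : Fin n =>
        zstar j = a ∧ trDeg g zstar j = d).card : ℝ) / (n : ℝ) := by
  classical
  -- fibers of τ ↦ τ.symm i within the automorphism group
  set fib : Fin n → Finset (Equiv.Perm (Fin n)) :=
    fun j => Finset.univ.filter (fun τ : Equiv.Perm (Fin n) => IsAut g τ ∧ τ.symm i = j)
    with hfib
  -- all fibers have the same cardinality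
  have hconst : ∀ j j' : Fin n, (fib j).card = (fib j').card := by
    intro j j'
    obtain ⟨σ, hσ, hσj⟩ := hvt j j'
    apply Finset.card_bij' (fun τ _ => σ.symm.trans τ) (fun τ _ => σ.trans τ)
    · intro τ hτ
      simp only [hfib, mem_filter, mem_univ, true_and] at hτ ⊢
      constructor
      · intro x y
        have h1 : IsAut g σ.symm := by
          intro x y
          have := hσ (σ.symm x) (σ.symm y)
          simpa using this.symm
        exact (h1 x y).trans (hτ.1 (σ.symm x) (σ.symm y))
      · simp only [Equiv.symm_trans_apply, Equiv.symm_symm]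
        rw [hτ.2, hσj]
    · intro τ hτ
      simp only [hfib, mem_filter, mem_univ, true_and] at hτ ⊢
      constructor
      · intro x y
        exact (hσ x y).trans (hτ.1 (σ x) (σ y))
      · simp only [Equiv.symm_trans_apply]
        rw [hτ.2, ← hσj, Equiv.symm_apply_apply]
    · intro τ _; ext x; simp
    · intro τ _; ext x; simp
  set c := (fib i).card with hc
  have hcpos : 0 < c := by
    refine Finset.card_pos.mpr ⟨1, ?_⟩
    exact Finset.mem_filter.mpr ⟨mem_univ _, fun _ _ => rfl, rfl⟩
  -- total count
  have hT : (Finset.univ.filter fun τ : Equiv.Perm (Fin n) => IsAut g τ).card = n * c := by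
    rw [Finset.card_eq_sum_card_fiberwise
      (f := fun τ : Equiv.Perm (Fin n) => τ.symm i) (t := Finset.univ) (fun _ _ => mem_univ _)]
    have : ∀ j ∈ (Finset.univ : Finset (Fin n)),
        ((Finset.univ.filter fun τ : Equiv.Perm (Fin n) => IsAut g τ).filter
          (fun τ => τ.symm i = j)).card = c := by
      intro j _
      rw [Finset.filter_filter]
      exact hconst j i
    rw [Finset.sum_congr rfl this]
    simp [mul_comm]
  -- numerator count
  set J := Finset.univ.filter fun j : Fin n => zstar j = a ∧ trDeg g zstar j = d with hJ
  have hSeq : (Finset.univ.filter fun τ : Equiv.Perm (Fin n) =>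
        IsAut g τ ∧ actAlloc τ zstar i = a ∧ trDeg g (actAlloc τ zstar) i = d)
      = Finset.univ.filter (fun τ : Equiv.Perm (Fin n) =>
        IsAut g τ ∧ zstar (τ.symm i) = a ∧ trDeg g zstar (τ.symm i) = d) := by
    apply Finset.filter_congr
    intro τ _
    constructor
    · rintro ⟨h1, h2, h3⟩
      exact ⟨h1, h2, by rw [← trDeg_act g τ h1]; exact h3⟩
    · rintro ⟨h1, h2, h3⟩
      exact ⟨h1, h2, by rw [trDeg_act g τ h1]; exact h3⟩
  have hS : (Finset.univ.filter fun τ : Equiv.Perm (Fin n) =>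
        IsAut g τ ∧ actAlloc τ zstar i = a ∧ trDeg g (actAlloc τ zstar) i = d).card
      = J.card * c := by
    rw [hSeq]
    rw [Finset.card_eq_sum_card_fiberwise
      (f := fun τ : Equiv.Perm (Fin n) => τ.symm i) (t := J) ?_]
    · have : ∀ j ∈ J,
          ((Finset.univ.filter (fun τ : Equiv.Perm (Fin n) =>
            IsAut g τ ∧ zstar (τ.symm i) = a ∧ trDeg g zstar (τ.symm i) = d)).filter
            (fun τ => τ.symm i = j)).card = c := by
        intro j hj
        rw [Finset.filter_filter]
        rw [hJ, mem_filter] at hj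
        have : (Finset.univ.filter fun τ : Equiv.Perm (Fin n) =>
            (IsAut g τ ∧ zstar (τ.symm i) = a ∧ trDeg g zstar (τ.symm i) = d) ∧ τ.symm i = j)
            = fib j := by
          apply Finset.filter_congr
          intro τ _
          constructor
          · rintro ⟨⟨h1, _, _⟩, h4⟩; exact ⟨h1, h4⟩
          · rintro ⟨h1, h4⟩
            exact ⟨⟨h1, by rw [h4]; exact hj.2.1, by rw [h4]; exact hj.2.2⟩, h4⟩
        rw [this]
        exact hconst j i
      rw [Finset.sum_congr rfl this]
      simp [mul_comm]
    · intro τ hτ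
      rw [Finset.mem_coe, mem_filter] at hτ
      rw [Finset.mem_coe, hJ, mem_filter]
      exact ⟨mem_univ _, hτ.2.2⟩
  rw [hS, hT]
  have hn0 : (n : ℝ) ≠ 0 := by positivity
  have hc0 : (c : ℝ) ≠ 0 := Nat.cast_ne_zero.mpr hcpos.ne'
  push_cast
  field_simp
end
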